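/- arXiv:2405.04987 — 5 statements merged into one kernel-verified Lean document; each statement's English description precedes it below -/
import Mathlib

section
/- With q := 1 − exp(−4‖c‖_∞/ε) ∈ (0,1), the operator K_μ satisfies the contraction bound (1/2)·(sup_X K_μφ − inf_X K_μφ) ≤ q · (1/2)·(sup_X φ − inf_X φ) for every continuous function φ : X → ℝ; equivalently, ‖K_μφ‖_{C/ℝ} ≤ q·‖φ‖_{C/ℝ}, where ‖ψ‖_{C/ℝ} = inf_{λ∈ℝ} ‖ψ − λ‖_∞ = (1/2)(sup ψ − inf ψ). -/
open MeasureTheory Real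

/-- **Contraction property of the self-transport kernel operator `K_μ`.**
With `q = 1 − exp(−4‖c‖_∞/ε) ∈ (0,1)` one has
`(1/2)·(sup K_μφ − inf K_μφ) ≤ q · (1/2)·(sup φ − inf φ)` for every continuous `φ`,
i.e. `‖K_μφ‖_{C/ℝ} ≤ q·‖φ‖_{C/ℝ}`. Here `K_μφ(y) = ∫ φ(x)·k_μ(x,y) dμ(x)` with
`k_μ(x,y) = exp((f(x)+f(y)−c(x,y))/ε)`, where `f` is the entropic self-transport
potential of the probability measure `μ`. -/
theorem stmt1 {X : Type*} [MetricSpace X] [CompactSpace X] [Nonempty X]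
    [MeasurableSpace X] [BorelSpace X]
    (ε : ℝ) (hε : 0 < ε) (c : X → X → ℝ)
    (hc_cont : Continuous fun p : X × X => c p.1 p.2)
    (hc_symm : ∀ x y, c x y = c y x) (hc_nonneg : ∀ x y, 0 ≤ c x y)
    (μ : Measure X) [IsProbabilityMeasure μ]
    (f : X → ℝ) (hf_cont : Continuous f)
    (hf_bound : ∀ x, |f x| ≤ (3 / 2) * ⨆ p : X × X, c p.1 p.2)
    (hfp : ∀ y, ∫ x, exp ((f x + f y - c x y) / ε) ∂μ = 1)
    (φ : X → ℝ) (hφ : Continuous φ) :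
    (1 / 2) * ((⨆ y, ∫ x, φ x * exp ((f x + f y - c x y) / ε) ∂μ)
        - ⨅ y, ∫ x, φ x * exp ((f x + f y - c x y) / ε) ∂μ)
      ≤ (1 - exp (-(4 * ⨆ p : X × X, c p.1 p.2) / ε))
        * ((1 / 2) * ((⨆ x, φ x) - ⨅ x, φ x)) := by
  set C : ℝ := ⨆ p : X × X, c p.1 p.2 with hC
  obtain ⟨x₀⟩ := ‹Nonempty X›
  have hbddc : BddAbove (Set.range fun p : X × X => c p.1 p.2) :=
    (isCompact_range hc_cont).bddAbove
  have hcle : ∀ x y, c x y ≤ C := fun x y => le_ciSup hbddc (x, y)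
  have hC0 : 0 ≤ C := le_trans (hc_nonneg x₀ x₀) (hcle x₀ x₀)
  set δ : ℝ := exp (-(4 * C) / ε) with hδ
  have hδpos : 0 < δ := exp_pos _
  have hδ1 : δ ≤ 1 := by
    rw [hδ, ← Real.exp_zero]
    exact Real.exp_le_exp.mpr (div_nonpos_of_nonpos_of_nonneg (by linarith) hε.le)
  set M : ℝ := ⨆ x, φ x with hM
  set m : ℝ := ⨅ x, φ x with hm
  have hφbddA : BddAbove (Set.range φ) := (isCompact_range hφ).bddAbove
  have hφbddB : BddBelow (Set.range φ) := (isCompact_range hφ).bddBelow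
  have hφleM : ∀ x, φ x ≤ M := fun x => le_ciSup hφbddA x
  have hmleφ : ∀ x, m ≤ φ x := fun x => ciInf_le hφbddB x
  -- kernel lower bound
  have hkey : ∀ x y, δ ≤ exp ((f x + f y - c x y) / ε) := by
    intro x y
    apply Real.exp_le_exp.mpr
    rw [div_le_div_iff_of_pos_right hε]
    have h1 := abs_le.mp (hf_bound x)
    have h2 := abs_le.mp (hf_bound y)
    have h3 := hcle x y
    linarith [h1.1, h2.1]
  -- continuity / integrability facts (for fixed y)
  have hkcont : ∀ y, Continuous fun x => exp ((f x + f y - c x y) / ε) := by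
    intro y
    have : Continuous fun x => c x y :=
      hc_cont.comp (continuous_id.prodMk continuous_const)
    exact Real.continuous_exp.comp (((hf_cont.add continuous_const).sub this).div_const ε)
  have hint : ∀ {g : X → ℝ}, Continuous g → Integrable g μ := fun hg =>
    hg.integrable_of_hasCompactSupport (HasCompactSupport.of_compactSpace _)
  have hkint : ∀ y, Integrable (fun x => exp ((f x + f y - c x y) / ε)) μ :=
    fun y => hint (hkcont y)
  have hφkint : ∀ y, Integrable (fun x => φ x * exp ((f x + f y - c x y) / ε)) μ :=
    fun y => hint (hφ.mul (hkcont y))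
  have hφint : Integrable φ μ := hint hφ
  set T : ℝ := ∫ x, φ x ∂μ with hT
  -- upper and lower bounds on K_μφ(y)
  have keyU : ∀ y, (∫ x, φ x * exp ((f x + f y - c x y) / ε) ∂μ)
      ≤ δ * T + M * (1 - δ) := by
    intro y
    have hmono : (∫ x, φ x * exp ((f x + f y - c x y) / ε) ∂μ)
        ≤ ∫ x, δ * φ x + M * (exp ((f x + f y - c x y) / ε) - δ) ∂μ := by
      apply integral_mono (hφkint y)
      · exact ((hφint.const_mul δ).add (hint (continuous_const.mul ((hkcont y).sub continuous_const))))
      · intro x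
        have h1 := hkey x y
        have h2 := hφleM x
        nlinarith
    calc (∫ x, φ x * exp ((f x + f y - c x y) / ε) ∂μ)
        ≤ ∫ x, δ * φ x + M * (exp ((f x + f y - c x y) / ε) - δ) ∂μ := hmono
      _ = δ * T + M * (1 - δ) := by
          rw [integral_add (hφint.const_mul δ)
              (hint (g := fun x => M * (exp ((f x + f y - c x y) / ε) - δ)) (continuous_const.mul ((hkcont y).sub continuous_const))),
            integral_const_mul, integral_const_mul,
            integral_sub (hkint y) (integrable_const δ), hfp y,
            integral_const]
          simp [hT]
  have keyL : ∀ y, δ * T + m * (1 - δ)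
      ≤ ∫ x, φ x * exp ((f x + f y - c x y) / ε) ∂μ := by
    intro y
    have hmono : (∫ x, δ * φ x + m * (exp ((f x + f y - c x y) / ε) - δ) ∂μ)
        ≤ ∫ x, φ x * exp ((f x + f y - c x y) / ε) ∂μ := by
      apply integral_mono _ (hφkint y)
      · intro x
        have h1 := hkey x y
        have h2 := hmleφ x
        nlinarith
      · exact ((hφint.const_mul δ).add (hint (continuous_const.mul ((hkcont y).sub continuous_const))))
    calc δ * T + m * (1 - δ)
        = ∫ x, δ * φ x + m * (exp ((f x + f y - c x y) / ε) - δ) ∂μ := by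
          rw [integral_add (hφint.const_mul δ)
              (hint (g := fun x => m * (exp ((f x + f y - c x y) / ε) - δ)) (continuous_const.mul ((hkcont y).sub continuous_const))),
            integral_const_mul, integral_const_mul,
            integral_sub (hkint y) (integrable_const δ), hfp y,
            integral_const]
          simp [hT]
      _ ≤ _ := hmono
  have hS : (⨆ y, ∫ x, φ x * exp ((f x + f y - c x y) / ε) ∂μ)
      ≤ δ * T + M * (1 - δ) := ciSup_le keyU
  have hI : δ * T + m * (1 - δ)
      ≤ ⨅ y, ∫ x, φ x * exp ((f x + f y - c x y) / ε) ∂μ := le_ciInf keyL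
  nlinarith [hS, hI]
end

section
/- For all r, s ∈ [0,∞), the entropic optimal transport cost between the symmetric two-point measures μ_r and μ_s on ℝ with quadratic cost equals OT_ε(μ_r, μ_s) = ε·( log 2 − log( k_c(r,s) + k_c(r,−s) ) ), where k_c(x,y) = exp(−(x−y)²/ε). -/
open MeasureTheory Filter Topology Real
open scoped ENNReal

noncomputable section

/-- `γ` is a coupling of `μ` and `ν`: its marginals are `μ` and `ν`. -/
def IsCoupling {X : Type*} [MeasurableSpace X] (μ ν : Measure X) (γ : Measure (X × X)) : Prop :=
  γ.map Prod.fst = μ ∧ γ.map Prod.snd = ν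

/-- The entropic optimal transport cost
`OT_ε(μ,ν) = inf_{γ ∈ Π(μ,ν)} ∫ c dγ + ε·KL(γ | μ⊗ν)`,
where the infimum is (equivalently) taken over the couplings with finite
Kullback–Leibler divergence `KL(γ | μ⊗ν) = ∫ log(dγ/d(μ⊗ν)) dγ`
(couplings with `KL = +∞` do not contribute to the infimum). -/
noncomputable def entOT {X : Type*} [MeasurableSpace X] (ε : ℝ) (c : X → X → ℝ)
    (μ ν : Measure X) : ℝ :=
  sInf { v : ℝ | ∃ γ : Measure (X × X), IsProbabilityMeasure γ ∧ IsCoupling μ ν γ ∧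
    γ ≪ μ.prod ν ∧
    Integrable (fun p => Real.log ((γ.rnDeriv (μ.prod ν)) p).toReal) γ ∧
    v = (∫ p, c p.1 p.2 ∂γ) + ε * ∫ p, Real.log ((γ.rnDeriv (μ.prod ν)) p).toReal ∂γ }

/-- The Sinkhorn divergence
`S_ε(μ,ν) = OT_ε(μ,ν) − (1/2)·OT_ε(μ,μ) − (1/2)·OT_ε(ν,ν)`. -/
noncomputable def sinkhorn {X : Type*} [MeasurableSpace X] (ε : ℝ) (c : X → X → ℝ)
    (μ ν : Measure X) : ℝ :=
  entOT ε c μ ν - (1 / 2) * entOT ε c μ μ - (1 / 2) * entOT ε c ν ν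

/-- The symmetric two-point measure `μ_r = (1/2)δ_r + (1/2)δ_{−r}` on `ℝ`. -/
noncomputable def mu2 (r : ℝ) : Measure ℝ :=
  ((1 : ℝ≥0∞) / 2) • Measure.dirac r + ((1 : ℝ≥0∞) / 2) • Measure.dirac (-r)

/-- The quadratic cost on `ℝ`. -/
noncomputable def c2 : ℝ → ℝ → ℝ := fun x y => (x - y) ^ 2

/-- The Gaussian kernel `k_c(x,y) = exp(−(x−y)²/ε)`. -/
noncomputable def kc (ε x y : ℝ) : ℝ := Real.exp (-(x - y) ^ 2 / ε)

/- ----------------- Auxiliary lemmas ----------------- -/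

instance mu2_prob (r : ℝ) : IsProbabilityMeasure (mu2 r) := by
  constructor
  simp only [mu2, Measure.add_apply, Measure.smul_apply, smul_eq_mul, measure_univ, mul_one]
  norm_num
  exact ENNReal.inv_two_add_inv_two

lemma smul_prod_aux {α β : Type*} [MeasurableSpace α] [MeasurableSpace β]
    (c : ℝ≥0∞) (μ : Measure α) (ν : Measure β) [SFinite μ] [SFinite ν] :
    (c • μ).prod ν = c • μ.prod ν := by
  ext s hs
  rw [Measure.prod_apply hs, Measure.smul_apply, Measure.prod_apply hs,
    lintegral_smul_measure, smul_eq_mul]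

lemma prod_smul_aux {α β : Type*} [MeasurableSpace α] [MeasurableSpace β]
    (c : ℝ≥0∞) (μ : Measure α) (ν : Measure β) [SFinite μ] [SFinite ν] :
    μ.prod (c • ν) = c • μ.prod ν := by
  ext s hs
  rw [Measure.prod_apply hs, Measure.smul_apply, Measure.prod_apply hs]
  simp only [Measure.smul_apply, smul_eq_mul]
  exact lintegral_const_mul c (measurable_measure_prodMk_left hs)

lemma dirac_withDensity_aux {α : Type*} [MeasurableSpace α] [MeasurableSingletonClass α]
    (a : α) {f : α → ℝ≥0∞} (hf : Measurable f) :
    (Measure.dirac a).withDensity f = f a • Measure.dirac a := by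
  classical
  ext s hs
  rw [withDensity_apply _ hs, setLIntegral_dirac' hf hs, Measure.smul_apply,
    Measure.dirac_apply' _ hs]
  by_cases h : a ∈ s <;> simp [h]

lemma integrable_of_null_compl {γ : Measure (ℝ × ℝ)} [IsFiniteMeasure γ]
    (P1 P2 P3 P4 : ℝ × ℝ) (hS : γ (({P1, P2, P3, P4} : Set (ℝ × ℝ))ᶜ) = 0)
    {h : ℝ × ℝ → ℝ} (hm : AEStronglyMeasurable h γ) : Integrable h γ := by
  refine Integrable.mono' (integrable_const (‖h P1‖ ⊔ ‖h P2‖ ⊔ ‖h P3‖ ⊔ ‖h P4‖)) hm ?_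
  rw [ae_iff]
  refine measure_mono_null (fun x hx => ?_) hS
  simp only [Set.mem_setOf_eq] at hx
  intro hxS
  simp only [Set.mem_insert_iff, Set.mem_singleton_iff] at hxS
  rcases hxS with rfl | rfl | rfl | rfl <;> exact hx (by simp [le_sup_iff])

lemma enn_eq_of_toReal {a b : ℝ≥0∞} (ha : a ≠ ⊤) (hb : b ≠ ⊤) (h : a.toReal = b.toReal) : a = b :=
  (ENNReal.toReal_eq_toReal_iff' ha hb).mp h

/-- **Entropic cost between symmetric two-point measures.** For `r, s ≥ 0`,
`OT_ε(μ_r, μ_s) = ε·(log 2 − log(k_c(r,s) + k_c(r,−s)))`. -/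
theorem stmt4 (ε : ℝ) (hε : 0 < ε) (r s : ℝ) (hr : 0 ≤ r) (hs : 0 ≤ s) :
    entOT ε c2 (mu2 r) (mu2 s)
      = ε * (Real.log 2 - Real.log (kc ε r s + kc ε r (-s))) := by
  classical
  have hp : 0 < kc ε r s := Real.exp_pos _
  have hq : 0 < kc ε r (-s) := Real.exp_pos _
  set Z : ℝ := kc ε r s + kc ε r (-s) with hZdef
  have hZ : 0 < Z := by positivity
  set K : ℝ := ε * (Real.log 2 - Real.log Z) with hKdef
  set P1 : ℝ × ℝ := (r, s) with hP1
  set P2 : ℝ × ℝ := (r, -s) with hP2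
  set P3 : ℝ × ℝ := (-r, s) with hP3
  set P4 : ℝ × ℝ := (-r, -s) with hP4
  set S : Set (ℝ × ℝ) := {P1, P2, P3, P4} with hSdef
  have hSmeas : MeasurableSet S := (Set.toFinite S).measurableSet
  -- the optimal density
  set fR : ℝ × ℝ → ℝ := fun x => 2 * Real.exp (-(x.1 - x.2) ^ 2 / ε) / Z with hfRdef
  have hfRpos : ∀ x, 0 < fR x := fun x => by
    have := Real.exp_pos (-(x.1 - x.2) ^ 2 / ε); rw [hfRdef]; positivity
  have hfRcont : Continuous fR := by
    apply Continuous.div_const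
    exact continuous_const.mul
      (Real.continuous_exp.comp (((continuous_fst.sub continuous_snd).pow 2).neg.div_const ε))
  have hlogfR : ∀ x, Real.log (fR x) = Real.log 2 + (-(x.1 - x.2) ^ 2 / ε) - Real.log Z := by
    intro x
    rw [hfRdef]
    rw [Real.log_div (by positivity) hZ.ne', Real.log_mul two_ne_zero (Real.exp_ne_zero _),
      Real.log_exp]
  have key : ∀ x : ℝ × ℝ, c2 x.1 x.2 + ε * Real.log (fR x) = K := by
    intro x
    rw [hlogfR x]
    simp only [c2, hKdef]
    field_simp
    ring
  -- values of fR at the four atoms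
  have hfR1 : fR P1 = 2 * kc ε r s / Z := rfl
  have hfR2 : fR P2 = 2 * kc ε r (-s) / Z := rfl
  have hfR3 : fR P3 = 2 * kc ε r (-s) / Z := by
    show 2 * Real.exp (-(-r - s) ^ 2 / ε) / Z = _
    rw [show ((-r : ℝ) - s) ^ 2 = (r - -s) ^ 2 by ring]
    rfl
  have hfR4 : fR P4 = 2 * kc ε r s / Z := by
    show 2 * Real.exp (-(-r - -s) ^ 2 / ε) / Z = _
    rw [show ((-r : ℝ) - -s) ^ 2 = (r - s) ^ 2 by ring]
    rfl
  have h12 : fR P1 + fR P2 = 2 := by rw [hfR1, hfR2]; field_simp; ring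
  have h13 : fR P1 + fR P3 = 2 := by rw [hfR1, hfR3]; field_simp; ring
  have h24 : fR P2 + fR P4 = 2 := by rw [hfR2, hfR4]; field_simp; ring
  have h34 : fR P3 + fR P4 = 2 := by rw [hfR3, hfR4]; field_simp; ring
  -- ENNReal density
  set f : ℝ × ℝ → ℝ≥0∞ := fun x => ENNReal.ofReal (fR x) with hfdef
  have hfm : Measurable f := hfRcont.measurable.ennreal_ofReal
  have hf12 : f P1 + f P2 = 2 := by
    rw [hfdef]
    simp only
    rw [← ENNReal.ofReal_add (hfRpos P1).le (hfRpos P2).le, h12]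
    norm_num
  have hf13 : f P1 + f P3 = 2 := by
    rw [hfdef]; simp only
    rw [← ENNReal.ofReal_add (hfRpos P1).le (hfRpos P3).le, h13]; norm_num
  have hf24 : f P2 + f P4 = 2 := by
    rw [hfdef]; simp only
    rw [← ENNReal.ofReal_add (hfRpos P2).le (hfRpos P4).le, h24]; norm_num
  have hf34 : f P3 + f P4 = 2 := by
    rw [hfdef]; simp only
    rw [← ENNReal.ofReal_add (hfRpos P3).le (hfRpos P4).le, h34]; norm_num
  -- the product measure
  set ρ : Measure (ℝ × ℝ) := (mu2 r).prod (mu2 s) with hρdef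
  have hρ : ρ = ((1 : ℝ≥0∞) / 4) • Measure.dirac P1 + ((1 : ℝ≥0∞) / 4) • Measure.dirac P2
      + ((1 : ℝ≥0∞) / 4) • Measure.dirac P3 + ((1 : ℝ≥0∞) / 4) • Measure.dirac P4 := by
    rw [hρdef]
    simp only [mu2, Measure.add_prod, Measure.prod_add, smul_prod_aux, prod_smul_aux,
      Measure.dirac_prod_dirac, smul_smul, smul_add]
    have hc : (1 : ℝ≥0∞) / 2 * ((1 : ℝ≥0∞) / 2) = (1 : ℝ≥0∞) / 4 := by
      simp only [one_div]
      rw [← ENNReal.mul_inv (by norm_num) (by norm_num)]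
      norm_num
    rw [hc, ← hP1, ← hP2, ← hP3, ← hP4]
    abel
  have hmemS_P : P1 ∈ S ∧ P2 ∈ S ∧ P3 ∈ S ∧ P4 ∈ S := by
    refine ⟨?_, ?_, ?_, ?_⟩ <;> simp [hSdef]
  have hρS : ρ Sᶜ = 0 := by
    have hd : ∀ Q : ℝ × ℝ, Q ∈ S → Measure.dirac Q Sᶜ = 0 := by
      intro Q hQ
      rw [Measure.dirac_apply' _ hSmeas.compl]
      exact Set.indicator_of_notMem (by simpa using hQ) _
    rw [hρ]
    simp only [Measure.add_apply, Measure.smul_apply, smul_eq_mul,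
      hd P1 hmemS_P.1, hd P2 hmemS_P.2.1, hd P3 hmemS_P.2.2.1, hd P4 hmemS_P.2.2.2]
    simp
  -- lintegral of f against ρ
  have hlintf : ∫⁻ x, f x ∂ρ = 1 := by
    rw [hρ]
    simp only [lintegral_add_measure, lintegral_smul_measure, lintegral_dirac _ f, smul_eq_mul]
    rw [show ((1:ℝ≥0∞)/4 * f P1 + (1:ℝ≥0∞)/4 * f P2 + (1:ℝ≥0∞)/4 * f P3 + (1:ℝ≥0∞)/4 * f P4)
        = (1:ℝ≥0∞)/4 * ((f P1 + f P2) + (f P3 + f P4)) by ring]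
    rw [hf12, hf34, show (2:ℝ≥0∞) + 2 = 4 by norm_num,
      ENNReal.div_mul_cancel (by norm_num) (by norm_num)]
  -- the optimal coupling
  set γs : Measure (ℝ × ℝ) := ρ.withDensity f with hγsdef
  have hacs : γs ≪ ρ := withDensity_absolutelyContinuous ρ f
  have hγs_atoms : γs = ((1 : ℝ≥0∞) / 4 * f P1) • Measure.dirac P1
      + ((1 : ℝ≥0∞) / 4 * f P2) • Measure.dirac P2
      + ((1 : ℝ≥0∞) / 4 * f P3) • Measure.dirac P3
      + ((1 : ℝ≥0∞) / 4 * f P4) • Measure.dirac P4 := by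
    rw [hγsdef, hρ]
    simp only [withDensity_add_measure, withDensity_smul_measure,
      dirac_withDensity_aux _ hfm, smul_smul]
  have hmapfst : γs.map Prod.fst = mu2 r := by
    rw [hγs_atoms]
    rw [Measure.map_add _ _ measurable_fst, Measure.map_add _ _ measurable_fst,
      Measure.map_add _ _ measurable_fst, Measure.map_smul, Measure.map_smul,
      Measure.map_smul, Measure.map_smul, Measure.map_dirac' measurable_fst,
      Measure.map_dirac' measurable_fst, Measure.map_dirac' measurable_fst,
      Measure.map_dirac' measurable_fst]
    have e1 : (Measure.dirac (Prod.fst P1) : Measure ℝ) = Measure.dirac r := rfl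
    have e2 : (Measure.dirac (Prod.fst P2) : Measure ℝ) = Measure.dirac r := rfl
    have e3 : (Measure.dirac (Prod.fst P3) : Measure ℝ) = Measure.dirac (-r) := rfl
    have e4 : (Measure.dirac (Prod.fst P4) : Measure ℝ) = Measure.dirac (-r) := rfl
    have hc42 : (1:ℝ≥0∞)/4 * 2 = 1/2 := by
      apply enn_eq_of_toReal (ENNReal.mul_ne_top (by simp) (by simp)) (by simp)
      rw [ENNReal.toReal_mul, ENNReal.toReal_div, ENNReal.toReal_div]
      norm_num
    rw [e1, e2, e3, e4, mu2, add_assoc, ← add_smul, ← add_smul, ← mul_add, ← mul_add,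
      hf12, hf34, hc42]
  have hc42 : (1:ℝ≥0∞)/4 * 2 = 1/2 := by
    apply enn_eq_of_toReal (ENNReal.mul_ne_top (by simp) (by simp)) (by simp)
    rw [ENNReal.toReal_mul, ENNReal.toReal_div, ENNReal.toReal_div]
    norm_num
  have hmapsnd : γs.map Prod.snd = mu2 s := by
    rw [hγs_atoms]
    rw [Measure.map_add _ _ measurable_snd, Measure.map_add _ _ measurable_snd,
      Measure.map_add _ _ measurable_snd, Measure.map_smul, Measure.map_smul,
      Measure.map_smul, Measure.map_smul, Measure.map_dirac' measurable_snd,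
      Measure.map_dirac' measurable_snd, Measure.map_dirac' measurable_snd,
      Measure.map_dirac' measurable_snd]
    have e1 : (Measure.dirac (Prod.snd P1) : Measure ℝ) = Measure.dirac s := rfl
    have e2 : (Measure.dirac (Prod.snd P2) : Measure ℝ) = Measure.dirac (-s) := rfl
    have e3 : (Measure.dirac (Prod.snd P3) : Measure ℝ) = Measure.dirac s := rfl
    have e4 : (Measure.dirac (Prod.snd P4) : Measure ℝ) = Measure.dirac (-s) := rfl
    rw [e1, e2, e3, e4, mu2]
    rw [show ((1:ℝ≥0∞)/4 * f P1) • Measure.dirac s + ((1:ℝ≥0∞)/4 * f P2) • Measure.dirac (-s)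
        + ((1:ℝ≥0∞)/4 * f P3) • Measure.dirac s + ((1:ℝ≥0∞)/4 * f P4) • Measure.dirac (-s)
        = (((1:ℝ≥0∞)/4 * f P1) • Measure.dirac s + ((1:ℝ≥0∞)/4 * f P3) • Measure.dirac s)
        + (((1:ℝ≥0∞)/4 * f P2) • Measure.dirac (-s)
            + ((1:ℝ≥0∞)/4 * f P4) • Measure.dirac (-s)) from by abel]
    rw [← add_smul, ← add_smul, ← mul_add, ← mul_add, hf13, hf24, hc42]
  have hprobγs : IsProbabilityMeasure γs := by
    constructor
    have h1 : γs Set.univ = ∫⁻ x, f x ∂ρ := by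
      rw [hγsdef, withDensity_apply _ MeasurableSet.univ, setLIntegral_univ]
    rw [h1, hlintf]
  have hγsS : γs Sᶜ = 0 := hacs hρS
  -- rnDeriv of γs
  have hrnγs : γs.rnDeriv ρ =ᶠ[ae γs] f :=
    (Measure.rnDeriv_withDensity ρ hfm).filter_mono hacs.ae_le
  have hlogf_ae : (fun x => Real.log ((γs.rnDeriv ρ) x).toReal) =ᶠ[ae γs]
      fun x => Real.log (fR x) := by
    filter_upwards [hrnγs] with x hx
    rw [hx, hfdef]
    simp only
    rw [ENNReal.toReal_ofReal (hfRpos x).le]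
  have hlogfRcont : Continuous fun x => Real.log (fR x) :=
    hfRcont.log fun x => (hfRpos x).ne'
  have hccont : Continuous fun x : ℝ × ℝ => c2 x.1 x.2 := by
    simp only [c2]
    exact (continuous_fst.sub continuous_snd).pow 2
  have int_logfR_γs : Integrable (fun x => Real.log (fR x)) γs :=
    integrable_of_null_compl P1 P2 P3 P4 (by rwa [← hSdef]) hlogfRcont.aestronglyMeasurable
  have int_c_γs : Integrable (fun x : ℝ × ℝ => c2 x.1 x.2) γs :=
    integrable_of_null_compl P1 P2 P3 P4 (by rwa [← hSdef]) hccont.aestronglyMeasurable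
  have int_logrn_γs : Integrable (fun x => Real.log ((γs.rnDeriv ρ) x).toReal) γs :=
    int_logfR_γs.congr hlogf_ae.symm
  have hval : (∫ x : ℝ × ℝ, c2 x.1 x.2 ∂γs)
      + ε * ∫ x, Real.log ((γs.rnDeriv ρ) x).toReal ∂γs = K := by
    rw [integral_congr_ae hlogf_ae, ← integral_const_mul, ← integral_add int_c_γs
      (int_logfR_γs.const_mul ε)]
    simp only [key]
    simp [measure_univ]
  -- atoms of ρ are not null
  have hρx_ne : ∀ x ∈ S, ρ {x} ≠ 0 := by
    intro x hx
    rw [hρ]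
    simp only [Measure.add_apply, Measure.smul_apply, smul_eq_mul]
    intro h0
    rw [add_eq_zero, add_eq_zero, add_eq_zero] at h0
    obtain ⟨⟨⟨g1, g2⟩, g3⟩, g4⟩ := h0
    rw [hSdef] at hx
    simp only [Set.mem_insert_iff, Set.mem_singleton_iff] at hx
    rcases hx with rfl | rfl | rfl | rfl
    · rw [Measure.dirac_apply_of_mem (Set.mem_singleton _)] at g1; simp at g1
    · rw [Measure.dirac_apply_of_mem (Set.mem_singleton _)] at g2; simp at g2
    · rw [Measure.dirac_apply_of_mem (Set.mem_singleton _)] at g3; simp at g3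
    · rw [Measure.dirac_apply_of_mem (Set.mem_singleton _)] at g4; simp at g4
  -- the lower bound
  have hlb : ∀ γ : Measure (ℝ × ℝ), IsProbabilityMeasure γ → IsCoupling (mu2 r) (mu2 s) γ →
      γ ≪ ρ → Integrable (fun x => Real.log ((γ.rnDeriv ρ) x).toReal) γ →
      K ≤ (∫ x : ℝ × ℝ, c2 x.1 x.2 ∂γ) + ε * ∫ x, Real.log ((γ.rnDeriv ρ) x).toReal ∂γ := by
    intro γ hprobγ _ hac hint
    have hγS : γ Sᶜ = 0 := hac hρS
    have hgmeas : Measurable (γ.rnDeriv ρ) := Measure.measurable_rnDeriv γ ρ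
    have hg_pos : ∀ᵐ x ∂γ, 0 < γ.rnDeriv ρ x := Measure.rnDeriv_pos hac
    have hg_fin : ∀ᵐ x ∂γ, γ.rnDeriv ρ x < ⊤ := hac.ae_le (Measure.rnDeriv_lt_top γ ρ)
    have hmemS : ∀ᵐ x ∂γ, x ∈ S := by
      rw [ae_iff]
      exact measure_mono_null (fun x hx => hx) hγS
    have hatom : ∀ᵐ x ∂γ, γ {x} ≠ 0 := by
      have hBs : ∀ Q : ℝ × ℝ, γ ({Q} ∩ {x | γ {x} = 0}) = 0 := by
        intro Q
        by_cases hQ : γ {Q} = 0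
        · exact measure_mono_null Set.inter_subset_left hQ
        · have he : ({Q} ∩ {x | γ {x} = 0} : Set (ℝ × ℝ)) = ∅ := by
            ext y
            simp only [Set.mem_inter_iff, Set.mem_singleton_iff, Set.mem_setOf_eq,
              Set.mem_empty_iff_false, iff_false, not_and]
            rintro rfl
            exact hQ
          rw [he, measure_empty]
      rw [ae_iff]
      simp only [not_not]
      refine measure_mono_null (fun x hx => ?_) (measure_union_null (measure_union_null
        (measure_union_null (measure_union_null hγS (hBs P1)) (hBs P2)) (hBs P3)) (hBs P4))
      simp only [Set.mem_setOf_eq] at hx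
      by_cases hxS : x ∈ S
      · rw [hSdef] at hxS
        simp only [Set.mem_insert_iff, Set.mem_singleton_iff] at hxS
        rcases hxS with rfl | rfl | rfl | rfl
        · exact Or.inl (Or.inl (Or.inl (Or.inr ⟨rfl, hx⟩)))
        · exact Or.inl (Or.inl (Or.inr ⟨rfl, hx⟩))
        · exact Or.inl (Or.inr ⟨rfl, hx⟩)
        · exact Or.inr ⟨rfl, hx⟩
      · exact Or.inl (Or.inl (Or.inl (Or.inl hxS)))
    have hgS : ∀ x : ℝ × ℝ, γ.rnDeriv ρ x * ρ {x} = γ {x} := by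
      intro x
      have h := Measure.setLIntegral_rnDeriv hac {x}
      rwa [lintegral_singleton] at h
    have hae_main : ∀ᵐ x ∂γ, (γ.rnDeriv ρ x).toReal = (γ {x}).toReal / (ρ {x}).toReal
        ∧ 0 < (γ.rnDeriv ρ x).toReal ∧ x ∈ S ∧ γ {x} ≠ 0 := by
      filter_upwards [hg_pos, hg_fin, hmemS, hatom] with x h1 h2 h3 h4
      have hρ0 := hρx_ne x h3
      have hρt : ρ {x} ≠ ⊤ := measure_ne_top ρ _
      have hgx : γ.rnDeriv ρ x = γ {x} / ρ {x} := by
        rw [ENNReal.eq_div_iff hρ0 hρt, mul_comm]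
        exact hgS x
      exact ⟨by rw [hgx, ENNReal.toReal_div], ENNReal.toReal_pos h1.ne' h2.ne, h3, h4⟩
    -- integrability of fR / gR
    set Mf : ℝ × ℝ → ℝ := fun x => fR x * (ρ {x}).toReal / (γ {x}).toReal with hMfdef
    set M : ℝ := Mf P1 ⊔ Mf P2 ⊔ Mf P3 ⊔ Mf P4 with hMdef
    have hMle : ∀ y, y ∈ S → Mf y ≤ M := by
      intro y hy
      rw [hSdef] at hy
      simp only [Set.mem_insert_iff, Set.mem_singleton_iff] at hy
      rcases hy with rfl | rfl | rfl | rfl <;> simp [hMdef, le_sup_iff]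
    have hfgmeas : AEStronglyMeasurable (fun x => fR x / (γ.rnDeriv ρ x).toReal) γ :=
      (hfRcont.measurable.div hgmeas.ennreal_toReal).aestronglyMeasurable
    have hbound : ∀ᵐ x ∂γ, ‖fR x / (γ.rnDeriv ρ x).toReal‖ ≤ M := by
      filter_upwards [hae_main] with x hx
      obtain ⟨hgRx, hgRpos, hxS, hγx⟩ := hx
      have hval : fR x / (γ.rnDeriv ρ x).toReal = Mf x := by
        rw [hgRx, div_div_eq_mul_div, hMfdef]
      rw [Real.norm_of_nonneg (div_nonneg (hfRpos x).le ENNReal.toReal_nonneg), hval]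
      exact hMle x hxS
    have int_fg : Integrable (fun x => fR x / (γ.rnDeriv ρ x).toReal) γ :=
      Integrable.mono' (integrable_const M) hfgmeas hbound
    have int_logfR : Integrable (fun x => Real.log (fR x)) γ :=
      integrable_of_null_compl P1 P2 P3 P4 (by rwa [← hSdef]) hlogfRcont.aestronglyMeasurable
    have int_c : Integrable (fun x : ℝ × ℝ => c2 x.1 x.2) γ :=
      integrable_of_null_compl P1 P2 P3 P4 (by rwa [← hSdef]) hccont.aestronglyMeasurable
    -- ∫ fR/gR dγ ≤ 1
    have hfg_le : ∫ x, fR x / (γ.rnDeriv ρ x).toReal ∂γ ≤ 1 := by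
      have hnn : 0 ≤ᶠ[ae γ] fun x => fR x / (γ.rnDeriv ρ x).toReal :=
        Eventually.of_forall fun x => div_nonneg (hfRpos x).le ENNReal.toReal_nonneg
      rw [integral_eq_lintegral_of_nonneg_ae hnn hfgmeas]
      have hcongr : (fun x => ENNReal.ofReal (fR x / (γ.rnDeriv ρ x).toReal)) =ᶠ[ae γ]
          fun x => f x / γ.rnDeriv ρ x := by
        filter_upwards [hg_pos, hg_fin] with x h1 h2
        rw [ENNReal.ofReal_div_of_pos (ENNReal.toReal_pos h1.ne' h2.ne),
          ENNReal.ofReal_toReal h2.ne]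
      have hle1 : ∫⁻ x, ENNReal.ofReal (fR x / (γ.rnDeriv ρ x).toReal) ∂γ ≤ 1 := by
        rw [lintegral_congr_ae hcongr]
        have hwd : ρ.withDensity (γ.rnDeriv ρ) = γ := Measure.withDensity_rnDeriv_eq γ ρ hac
        calc ∫⁻ x, f x / γ.rnDeriv ρ x ∂γ
            = ∫⁻ x, f x / γ.rnDeriv ρ x ∂(ρ.withDensity (γ.rnDeriv ρ)) := by rw [hwd]
          _ = ∫⁻ x, (γ.rnDeriv ρ * fun y => f y / γ.rnDeriv ρ y) x ∂ρ :=
              lintegral_withDensity_eq_lintegral_mul ρ hgmeas (hfm.div hgmeas)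
          _ ≤ ∫⁻ x, f x ∂ρ := lintegral_mono fun x => ENNReal.mul_div_le
          _ = 1 := hlintf
      calc (∫⁻ x, ENNReal.ofReal (fR x / (γ.rnDeriv ρ x).toReal) ∂γ).toReal
          ≤ (1 : ℝ≥0∞).toReal := ENNReal.toReal_mono (by simp) hle1
        _ = 1 := by simp
    -- pointwise Gibbs inequality
    have hptwise : (fun x => 1 - fR x / (γ.rnDeriv ρ x).toReal) ≤ᶠ[ae γ]
        fun x => Real.log ((γ.rnDeriv ρ x).toReal) - Real.log (fR x) := by
      filter_upwards [hae_main] with x hx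
      have hgpos := hx.2.1
      have h := Real.log_le_sub_one_of_pos (div_pos (hfRpos x) hgpos)
      rw [Real.log_div (hfRpos x).ne' hgpos.ne'] at h
      linarith
    have int_diff : Integrable
        (fun x => Real.log ((γ.rnDeriv ρ x).toReal) - Real.log (fR x)) γ := hint.sub int_logfR
    have hI : 0 ≤ ∫ x, (Real.log ((γ.rnDeriv ρ x).toReal) - Real.log (fR x)) ∂γ := by
      have h1 : ∫ x, (1 - fR x / (γ.rnDeriv ρ x).toReal) ∂γ
          ≤ ∫ x, (Real.log ((γ.rnDeriv ρ x).toReal) - Real.log (fR x)) ∂γ :=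
        integral_mono_ae ((integrable_const 1).sub int_fg) int_diff hptwise
      have h2 : ∫ x, (1 - fR x / (γ.rnDeriv ρ x).toReal) ∂γ
          = 1 - ∫ x, fR x / (γ.rnDeriv ρ x).toReal ∂γ := by
        rw [integral_sub (integrable_const 1) int_fg, integral_const]
        simp [measure_univ]
      linarith
    -- conclude
    have hc_eq : ∀ x : ℝ × ℝ, c2 x.1 x.2 = K - ε * Real.log (fR x) := fun x => by
      have := key x; linarith
    have hcint : ∫ x : ℝ × ℝ, c2 x.1 x.2 ∂γ = K - ε * ∫ x, Real.log (fR x) ∂γ := by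
      simp only [hc_eq]
      rw [integral_sub (integrable_const K) (int_logfR.const_mul ε), integral_const,
        integral_const_mul]
      simp [measure_univ]
    rw [hcint]
    have hsplit : ∫ x, (Real.log ((γ.rnDeriv ρ x).toReal) - Real.log (fR x)) ∂γ
        = (∫ x, Real.log ((γ.rnDeriv ρ x).toReal) ∂γ) - ∫ x, Real.log (fR x) ∂γ :=
      integral_sub hint int_logfR
    have hfinal : 0 ≤ ε * ((∫ x, Real.log ((γ.rnDeriv ρ x).toReal) ∂γ)
        - ∫ x, Real.log (fR x) ∂γ) := by
      rw [← hsplit]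
      exact mul_nonneg hε.le hI
    linarith
  -- assemble
  rw [entOT, ← hρdef]
  have hmem : K ∈ { v : ℝ | ∃ γ : Measure (ℝ × ℝ), IsProbabilityMeasure γ ∧
      IsCoupling (mu2 r) (mu2 s) γ ∧ γ ≪ ρ ∧
      Integrable (fun x => Real.log ((γ.rnDeriv ρ) x).toReal) γ ∧
      v = (∫ x : ℝ × ℝ, c2 x.1 x.2 ∂γ) + ε * ∫ x, Real.log ((γ.rnDeriv ρ) x).toReal ∂γ } :=
    ⟨γs, hprobγs, ⟨hmapfst, hmapsnd⟩, hacs, int_logrn_γs, hval.symm⟩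
  apply le_antisymm
  · exact csInf_le ⟨K, fun v hv => by
      obtain ⟨γ, h1, h2, h3, h4, rfl⟩ := hv; exact hlb γ h1 h2 h3 h4⟩ hmem
  · exact le_csInf ⟨K, hmem⟩ fun v hv => by
      obtain ⟨γ, h1, h2, h3, h4, rfl⟩ := hv; exact hlb γ h1 h2 h3 h4
end
end

section
/- For every ε > 0, the square root of the Sinkhorn divergence fails the triangle inequality on probability measures on ℝ with quadratic cost: with r = √ε and μ_t = (1/2)δ_t + (1/2)δ_{−t}, one has √(S_ε(δ_0, μ_{2r})) > √(S_ε(δ_0, μ_r)) + √(S_ε(μ_r, μ_{2r})). -/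
open MeasureTheory Filter Topology Real
open scoped ENNReal

noncomputable section

lemma smul_prod_meas {α β : Type*} [MeasurableSpace α] [MeasurableSpace β]
    (c : ℝ≥0∞) (μ : Measure α) (ν : Measure β) [SFinite μ] [SFinite ν] :
    (c • μ).prod ν = c • (μ.prod ν) := by
  ext s hs
  rw [Measure.prod_apply hs, Measure.smul_apply, Measure.prod_apply hs,
    lintegral_smul_measure, smul_eq_mul]

lemma prod_smul_meas {α β : Type*} [MeasurableSpace α] [MeasurableSpace β]
    (c : ℝ≥0∞) (μ : Measure α) (ν : Measure β) [SFinite μ] [SFinite ν] :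
    μ.prod (c • ν) = c • (μ.prod ν) := by
  ext s hs
  rw [Measure.prod_apply hs, Measure.smul_apply, Measure.prod_apply hs, smul_eq_mul,
    ← lintegral_const_mul c (measurable_measure_prodMk_left hs)]
  simp

variable {X Y : Type*} [MeasurableSpace X] [MeasurableSpace Y]

lemma map_sum_smul_dirac (T : Finset X) (k : X → ℝ≥0∞) {f : X → Y} (hf : Measurable f) :
    (∑ s ∈ T, k s • Measure.dirac s).map f = ∑ s ∈ T, k s • Measure.dirac (f s) := by
  classical
  induction T using Finset.induction with
  | empty => simp
  | insert _ _ h ih =>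
    rw [Finset.sum_insert h, Finset.sum_insert h, Measure.map_add _ _ hf, Measure.map_smul,
      Measure.map_dirac' hf, ih]

lemma wd_sum_smul_dirac [MeasurableSingletonClass X] (T : Finset X) (k : X → ℝ≥0∞)
    {f : X → ℝ≥0∞} (hf : Measurable f) :
    (∑ s ∈ T, k s • Measure.dirac s).withDensity f = ∑ s ∈ T, (k s * f s) • Measure.dirac s := by
  classical
  have hdir : ∀ a : X, (Measure.dirac a).withDensity f = f a • Measure.dirac a := by
    intro a
    ext A hA
    rw [withDensity_apply _ hA, restrict_dirac' hA]
    by_cases h : a ∈ A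
    · simp [h, lintegral_dirac]
    · simp [h]
  induction T using Finset.induction with
  | empty => simp
  | insert _ _ h ih =>
    rw [Finset.sum_insert h, Finset.sum_insert h, withDensity_add_measure,
      withDensity_smul_measure, ih, hdir, smul_smul]

lemma integrable_sum_smul_dirac [MeasurableSingletonClass X] (T : Finset X) (k : X → ℝ≥0∞)
    (hk : ∀ s ∈ T, k s ≠ ∞) {f : X → ℝ} (hf : Measurable f) :
    Integrable f (∑ s ∈ T, k s • Measure.dirac s) := by
  classical
  induction T using Finset.induction with
  | empty => simp
  | @insert a T h ih =>
    rw [Finset.sum_insert h]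
    refine Integrable.add_measure ?_ (ih fun s hs => hk s (Finset.mem_insert_of_mem hs))
    refine Integrable.smul_measure ?_ (hk a (Finset.mem_insert_self a T))
    refine ⟨hf.aestronglyMeasurable, ?_⟩
    simp [HasFiniteIntegral, lintegral_dirac]

lemma integral_sum_smul_dirac [MeasurableSingletonClass X] (T : Finset X) (k : X → ℝ≥0∞)
    (hk : ∀ s ∈ T, k s ≠ ∞) {f : X → ℝ} (hf : Measurable f) :
    ∫ x, f x ∂(∑ s ∈ T, k s • Measure.dirac s) = ∑ s ∈ T, (k s).toReal * f s := by
  rw [integral_finset_sum_measure]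
  · refine Finset.sum_congr rfl fun s hs => ?_
    rw [integral_smul_measure, integral_dirac, smul_eq_mul]
  · intro s hs
    refine Integrable.smul_measure ?_ (hk s hs)
    refine ⟨hf.aestronglyMeasurable, ?_⟩
    simp [HasFiniteIntegral, lintegral_dirac]

lemma sum_smul_dirac_apply [MeasurableSingletonClass X] (T : Finset X) (k : X → ℝ≥0∞) (A : Set X) :
    (∑ s ∈ T, k s • Measure.dirac s) A = ∑ s ∈ T, k s * (Measure.dirac s A) := by
  rw [Measure.finset_sum_apply]
  rfl

variable {X : Type*} [MeasurableSpace X]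

lemma meas_eq_sum_smul_dirac [MeasurableSingletonClass X] (T : Finset X) (γ : Measure X)
    (hT : γ (↑T : Set X)ᶜ = 0) : γ = ∑ s ∈ T, γ {s} • Measure.dirac s := by
  classical
  ext A hA
  have h2 : γ (A \ ↑T) = 0 := measure_mono_null (fun x hx => hx.2) hT
  have h1 : γ A = γ (A ∩ ↑T) := by
    have h3 := measure_inter_add_diff (μ := γ) A (T.measurableSet)
    rw [h2, add_zero] at h3
    exact h3.symm
  have h4 : A ∩ ↑T = ⋃ s ∈ T.filter (· ∈ A), ({s} : Set X) := by
    ext x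
    simp only [Set.mem_inter_iff, Set.mem_iUnion, Finset.mem_filter, Set.mem_singleton_iff]
    constructor
    · rintro ⟨hx, hxT⟩; exact ⟨x, ⟨hxT, hx⟩, rfl⟩
    · rintro ⟨s, ⟨hsT, hsA⟩, rfl⟩; exact ⟨hsA, hsT⟩
  have h5 : γ (A ∩ ↑T) = ∑ s ∈ T.filter (· ∈ A), γ {s} := by
    rw [h4, measure_biUnion_finset]
    · intro s _ t _ hst
      simp [Function.onFun, Set.disjoint_singleton, hst]
    · intro s _; exact measurableSet_singleton s
  rw [h1, h5, Measure.finset_sum_apply, Finset.sum_filter]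
  refine Finset.sum_congr rfl fun s _ => ?_
  rw [Measure.smul_apply, Measure.dirac_apply' _ hA, smul_eq_mul]
  by_cases h : s ∈ A <;> simp [h]

lemma real_gibbs {X : Type*} (ε : ℝ) (hε : 0 < ε) (T : Finset X) (cst w g : X → ℝ)
    (hw : ∀ s ∈ T, 0 < w s) (hg : ∀ s ∈ T, 0 ≤ g s) (hg1 : ∑ s ∈ T, g s = 1) :
    -ε * Real.log (∑ s ∈ T, w s * Real.exp (-(cst s)/ε)) ≤
      (∑ s ∈ T, g s * cst s) + ε * ∑ s ∈ T, g s * Real.log (g s / w s) := by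
  set Z : ℝ := ∑ s ∈ T, w s * Real.exp (-(cst s)/ε) with hZ
  have hZpos : 0 < Z := by
    have hne : T.Nonempty := by
      by_contra h
      rw [Finset.not_nonempty_iff_eq_empty] at h
      simp [h] at hg1
    exact Finset.sum_pos (fun s hs => mul_pos (hw s hs) (Real.exp_pos _)) hne
  set q : X → ℝ := fun s => w s * Real.exp (-(cst s)/ε) / Z with hq
  have hqpos : ∀ s ∈ T, 0 < q s := fun s hs =>
    div_pos (mul_pos (hw s hs) (Real.exp_pos _)) hZpos
  have hq1 : ∑ s ∈ T, q s = 1 := by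
    rw [hq, ← Finset.sum_div, ← hZ, div_self hZpos.ne']
  have key : ∀ s ∈ T, ε * (g s * (-Real.log Z)) + ε * (g s - q s) ≤
      g s * cst s + ε * (g s * Real.log (g s / w s)) := by
    intro s hs
    rcases eq_or_lt_of_le (hg s hs) with h0 | h0
    · rw [← h0]
      have hq' := (hqpos s hs).le
      simp only [zero_mul, mul_zero, zero_add, zero_sub, zero_mul]
      nlinarith
    · have hws := hw s hs
      have hqs := hqpos s hs
      have hlog : Real.log (q s / g s) ≤ q s / g s - 1 :=
        Real.log_le_sub_one_of_pos (div_pos hqs h0)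
      have hlq : Real.log (q s / g s) = Real.log (q s) - Real.log (g s) :=
        Real.log_div hqs.ne' h0.ne'
      have hmain : g s - q s ≤ g s * Real.log (g s) - g s * Real.log (q s) := by
        have h1 : g s * Real.log (q s / g s) ≤ g s * (q s / g s - 1) :=
          mul_le_mul_of_nonneg_left hlog h0.le
        have h2 : g s * (q s / g s) = q s := by field_simp
        rw [hlq, mul_sub, mul_sub, h2] at h1
        linarith
      have hlogq : Real.log (q s) = Real.log (w s) + (-(cst s)/ε) - Real.log Z := by
        rw [hq]
        rw [Real.log_div (mul_pos hws (Real.exp_pos _)).ne' hZpos.ne',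
          Real.log_mul hws.ne' (Real.exp_pos _).ne', Real.log_exp]
      have hlogqε : ε * Real.log (q s) = ε * Real.log (w s) - cst s - ε * Real.log Z := by
        rw [hlogq]
        field_simp
        ring
      have hloggw : Real.log (g s / w s) = Real.log (g s) - Real.log (w s) :=
        Real.log_div h0.ne' hws.ne'
      rw [hloggw]
      have h6 := mul_le_mul_of_nonneg_left hmain hε.le
      have h7 : g s * (ε * Real.log (q s)) =
          g s * (ε * Real.log (w s) - cst s - ε * Real.log Z) := by rw [hlogqε]
      nlinarith [h6, h7]
  have hsum := Finset.sum_le_sum key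
  have hL : ∑ s ∈ T, (ε * (g s * (-Real.log Z)) + ε * (g s - q s)) = -ε * Real.log Z := by
    rw [Finset.sum_add_distrib, ← Finset.mul_sum, ← Finset.mul_sum, ← Finset.sum_mul, hg1,
      Finset.sum_sub_distrib, hg1, hq1]
    ring
  have hR : ∑ s ∈ T, (g s * cst s + ε * (g s * Real.log (g s / w s))) =
      (∑ s ∈ T, g s * cst s) + ε * ∑ s ∈ T, g s * Real.log (g s / w s) := by
    rw [Finset.sum_add_distrib, ← Finset.mul_sum]
  rw [hL, hR] at hsum
  exact hsum

lemma entOT_eq_gibbs {X : Type*} [MeasurableSpace X] [MeasurableSingletonClass X]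
    [MeasurableSingletonClass (X × X)]
    (ε : ℝ) (hε : 0 < ε) (c : X → X → ℝ) (hc : Measurable fun p : X × X => c p.1 p.2)
    (T : Finset (X × X)) (w : X × X → ℝ) (hw : ∀ s ∈ T, 0 < w s)
    (hw1 : ∑ s ∈ T, w s = 1)
    (μ ν : Measure X)
    (hprod : μ.prod ν = ∑ s ∈ T, ENNReal.ofReal (w s) • Measure.dirac s)
    (Z : ℝ) (hZdef : Z = ∑ s ∈ T, w s * Real.exp (-(c s.1 s.2)/ε))
    (hfst : (∑ s ∈ T, ENNReal.ofReal (w s * Real.exp (-(c s.1 s.2)/ε) / Z) • Measure.dirac s.1)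
      = μ)
    (hsnd : (∑ s ∈ T, ENNReal.ofReal (w s * Real.exp (-(c s.1 s.2)/ε) / Z) • Measure.dirac s.2)
      = ν) :
    entOT ε c μ ν = -ε * Real.log Z := by
  classical
  have hTne : T.Nonempty := by
    by_contra h
    rw [Finset.not_nonempty_iff_eq_empty] at h
    simp [h] at hw1
  set ρ : Measure (X × X) := ∑ s ∈ T, ENNReal.ofReal (w s) • Measure.dirac s with hρ
  have hZpos : 0 < Z := by
    rw [hZdef]
    exact Finset.sum_pos (fun s hs => mul_pos (hw s hs) (Real.exp_pos _)) hTne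
  set q : X × X → ℝ := fun s => w s * Real.exp (-(c s.1 s.2)/ε) / Z with hqdef
  have hqpos : ∀ s ∈ T, 0 < q s := fun s hs =>
    div_pos (mul_pos (hw s hs) (Real.exp_pos _)) hZpos
  have hq1 : ∑ s ∈ T, q s = 1 := by
    rw [hqdef]
    rw [← Finset.sum_div, ← hZdef, div_self hZpos.ne']
  -- basic facts about ρ
  have hρapp : ∀ s ∈ T, ρ {s} = ENNReal.ofReal (w s) := by
    intro s hs
    rw [hρ, sum_smul_dirac_apply]
    rw [Finset.sum_eq_single s]
    · simp [Measure.dirac_apply_of_mem]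
    · intro t htT hts
      simp [Measure.dirac_apply, Set.indicator, hts]
    · intro h; exact absurd hs h
  have hρcompl : ρ ((↑T : Set (X × X))ᶜ) = 0 := by
    rw [hρ, sum_smul_dirac_apply]
    refine Finset.sum_eq_zero fun s hs => ?_
    rw [Measure.dirac_apply]
    simp [Set.indicator, hs]
  have hρprob : IsProbabilityMeasure ρ := by
    constructor
    rw [hρ, sum_smul_dirac_apply]
    have : ∀ s ∈ T, ENNReal.ofReal (w s) * Measure.dirac s Set.univ
        = ENNReal.ofReal (w s) := by
      intro s _; simp
    rw [Finset.sum_congr rfl this, ← ENNReal.ofReal_sum_of_nonneg (fun s hs => (hw s hs).le),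
      hw1, ENNReal.ofReal_one]
  haveI := hρprob
  -- the lower bound
  have hlow : ∀ v ∈ { v : ℝ | ∃ γ : Measure (X × X), IsProbabilityMeasure γ ∧ IsCoupling μ ν γ ∧
      γ ≪ μ.prod ν ∧
      Integrable (fun p => Real.log ((γ.rnDeriv (μ.prod ν)) p).toReal) γ ∧
      v = (∫ p, c p.1 p.2 ∂γ) + ε * ∫ p, Real.log ((γ.rnDeriv (μ.prod ν)) p).toReal ∂γ },
      -ε * Real.log Z ≤ v := by
    rintro v ⟨γ, hγp, _hγc, hγac, _hγint, hveq⟩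
    rw [hprod] at hγac hveq
    set h : X × X → ℝ≥0∞ := γ.rnDeriv ρ with hhdef
    have hγcompl : γ ((↑T : Set (X × X))ᶜ) = 0 := hγac hρcompl
    have hγeq := meas_eq_sum_smul_dirac T γ hγcompl
    set g : X × X → ℝ := fun s => (γ {s}).toReal with hgdef
    have hγfin : ∀ s : X × X, γ {s} ≠ ∞ := fun s => (measure_lt_top γ _).ne
    have hkey : ∀ s ∈ T, (h s).toReal = g s / w s := by
      intro s hs
      have h1 : γ {s} = h s * ρ {s} := by
        conv_lhs => rw [← Measure.withDensity_rnDeriv_eq γ ρ hγac]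
        rw [withDensity_apply _ (measurableSet_singleton s), Measure.restrict_singleton,
          lintegral_smul_measure, lintegral_dirac, mul_comm]
        rfl
      rw [hρapp s hs] at h1
      have hwne : ENNReal.ofReal (w s) ≠ 0 := by
        simp [ENNReal.ofReal_eq_zero, not_le, hw s hs]
      have hhfin : h s ≠ ∞ := by
        intro hcon
        rw [hcon, ENNReal.top_mul hwne] at h1
        exact hγfin s h1
      rw [hgdef]
      simp only
      rw [h1, ENNReal.toReal_mul, ENNReal.toReal_ofReal (hw s hs).le,
        mul_div_cancel_right₀ _ (hw s hs).ne']
    have hI : ∀ f : X × X → ℝ, Measurable f → ∫ x, f x ∂γ = ∑ s ∈ T, g s * f s := by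
      intro f hf
      conv_lhs => rw [hγeq]
      rw [integral_sum_smul_dirac T _ (fun s _ => hγfin s) hf]
    have hg1 : ∑ s ∈ T, g s = 1 := by
      have h1 : (1 : ℝ≥0∞) = ∑ s ∈ T, γ {s} := by
        conv_lhs => rw [← hγp.measure_univ, hγeq]
        rw [sum_smul_dirac_apply]
        refine Finset.sum_congr rfl fun s _ => ?_
        simp
      have h2 := congrArg ENNReal.toReal h1
      rw [ENNReal.toReal_sum (fun s _ => hγfin s)] at h2
      simpa using h2.symm
    have hmeaslog : Measurable fun p : X × X => Real.log (h p).toReal :=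
      Real.measurable_log.comp (Measure.measurable_rnDeriv γ ρ).ennreal_toReal
    rw [hveq, hI _ hc, hI _ hmeaslog]
    have hcongr : ∑ s ∈ T, g s * Real.log (h s).toReal
        = ∑ s ∈ T, g s * Real.log (g s / w s) := by
      refine Finset.sum_congr rfl fun s hs => ?_
      rw [hkey s hs]
    rw [hcongr]
    have hg2 := real_gibbs ε hε T (fun s => c s.1 s.2) w g hw
      (fun s _ => ENNReal.toReal_nonneg) hg1
    rw [← hZdef] at hg2
    exact hg2
  -- upper bound: the Gibbs coupling
  set γ₀ : Measure (X × X) := ∑ s ∈ T, ENNReal.ofReal (q s) • Measure.dirac s with hγ₀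
  have hγ₀prob : IsProbabilityMeasure γ₀ := by
    constructor
    rw [hγ₀, sum_smul_dirac_apply]
    have : ∀ s ∈ T, ENNReal.ofReal (q s) * Measure.dirac s Set.univ = ENNReal.ofReal (q s) := by
      intro s _; simp
    rw [Finset.sum_congr rfl this, ← ENNReal.ofReal_sum_of_nonneg (fun s hs => (hqpos s hs).le),
      hq1, ENNReal.ofReal_one]
  have hγ₀coup : IsCoupling μ ν γ₀ := by
    constructor
    · rw [hγ₀, map_sum_smul_dirac T _ measurable_fst]
      exact hfst
    · rw [hγ₀, map_sum_smul_dirac T _ measurable_snd]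
      exact hsnd
  have hγ₀ac : γ₀ ≪ ρ := by
    refine Measure.AbsolutelyContinuous.mk fun A hA hA0 => ?_
    rw [hρ, sum_smul_dirac_apply] at hA0
    rw [hγ₀, sum_smul_dirac_apply]
    refine Finset.sum_eq_zero fun s hs => ?_
    have h1 := (Finset.sum_eq_zero_iff.mp hA0) s hs
    rcases mul_eq_zero.mp h1 with h | h
    · exact absurd h (by simp [ENNReal.ofReal_eq_zero, not_le, hw s hs])
    · rw [h, mul_zero]
  set hfun : X × X → ℝ≥0∞ := fun x => ENNReal.ofReal (Real.exp (-(c x.1 x.2)/ε)/Z) with hfd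
  have hfunmeas : Measurable hfun := by
    apply ENNReal.measurable_ofReal.comp
    exact (Real.measurable_exp.comp (hc.neg.div_const ε)).div_const Z
  have hden : ρ.withDensity hfun = γ₀ := by
    rw [hρ, wd_sum_smul_dirac T _ hfunmeas, hγ₀]
    refine Finset.sum_congr rfl fun s hs => ?_
    congr 1
    rw [hfd]
    simp only
    rw [← ENNReal.ofReal_mul (hw s hs).le]
    congr 1
    rw [hqdef]
    ring
  have hrn : γ₀.rnDeriv ρ =ᵐ[ρ] hfun := by
    conv_lhs => rw [← hden]
    exact Measure.rnDeriv_withDensity ρ hfunmeas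
  have hrnγ : γ₀.rnDeriv ρ =ᵐ[γ₀] hfun := hγ₀ac.ae_eq hrn
  have hmeaslog0 : Measurable fun p : X × X => Real.log ((γ₀.rnDeriv ρ) p).toReal :=
    Real.measurable_log.comp (Measure.measurable_rnDeriv γ₀ ρ).ennreal_toReal
  have hint0 : Integrable (fun p => Real.log ((γ₀.rnDeriv ρ) p).toReal) γ₀ := by
    rw [hγ₀]
    exact integrable_sum_smul_dirac T _ (fun s _ => ENNReal.ofReal_ne_top) hmeaslog0
  have hIq : ∀ f : X × X → ℝ, Measurable f → ∫ x, f x ∂γ₀ = ∑ s ∈ T, q s * f s := by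
    intro f hf
    conv_lhs => rw [hγ₀]
    rw [integral_sum_smul_dirac T _ (fun s _ => ENNReal.ofReal_ne_top) hf]
    refine Finset.sum_congr rfl fun s hs => ?_
    rw [ENNReal.toReal_ofReal (hqpos s hs).le]
  have hlogint : ∫ p, Real.log ((γ₀.rnDeriv ρ) p).toReal ∂γ₀
      = ∑ s ∈ T, q s * (-(c s.1 s.2)/ε - Real.log Z) := by
    have hae : (fun p => Real.log ((γ₀.rnDeriv ρ) p).toReal)
        =ᵐ[γ₀] fun p => Real.log ((hfun p).toReal) := by
      filter_upwards [hrnγ] with x hx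
      rw [hx]
    rw [integral_congr_ae hae, hIq (fun p => Real.log ((hfun p).toReal)) (Real.measurable_log.comp hfunmeas.ennreal_toReal)]
    refine Finset.sum_congr rfl fun s hs => ?_
    congr 1
    rw [hfd]
    simp only
    rw [ENNReal.toReal_ofReal (by positivity),
      Real.log_div (Real.exp_pos _).ne' hZpos.ne', Real.log_exp]
  have hv0 : (∫ p, c p.1 p.2 ∂γ₀) + ε * ∫ p, Real.log ((γ₀.rnDeriv ρ) p).toReal ∂γ₀
      = -ε * Real.log Z := by
    rw [hIq _ hc, hlogint, Finset.mul_sum, ← Finset.sum_add_distrib]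
    have hterm : ∀ s ∈ T, q s * c s.1 s.2 + ε * (q s * (-(c s.1 s.2)/ε - Real.log Z))
        = -ε * Real.log Z * q s := by
      intro s hs
      field_simp
      ring
    rw [Finset.sum_congr rfl hterm, ← Finset.mul_sum, hq1, mul_one]
  have hmem : -ε * Real.log Z ∈ { v : ℝ | ∃ γ : Measure (X × X), IsProbabilityMeasure γ ∧
      IsCoupling μ ν γ ∧ γ ≪ μ.prod ν ∧
      Integrable (fun p => Real.log ((γ.rnDeriv (μ.prod ν)) p).toReal) γ ∧
      v = (∫ p, c p.1 p.2 ∂γ) + ε * ∫ p, Real.log ((γ.rnDeriv (μ.prod ν)) p).toReal ∂γ } := by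
    refine ⟨γ₀, hγ₀prob, hγ₀coup, ?_, ?_, ?_⟩
    · rw [hprod]; exact hγ₀ac
    · rw [hprod]; exact hint0
    · rw [hprod, hv0]
  unfold entOT
  exact le_antisymm (csInf_le ⟨-ε * Real.log Z, fun v hv => hlow v hv⟩ hmem)
    (le_csInf ⟨_, hmem⟩ hlow)

lemma ofReal_half : ENNReal.ofReal (1/2 : ℝ) = (1:ℝ≥0∞)/2 := by
  rw [ENNReal.ofReal_div_of_pos (by norm_num)]
  norm_num

lemma ofReal_quarter : ENNReal.ofReal (1/4 : ℝ) = (1:ℝ≥0∞)/4 := by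
  rw [ENNReal.ofReal_div_of_pos (by norm_num)]
  norm_num

lemma two_smul_dirac {X : Type*} [MeasurableSpace X] (a : X) (x y : ℝ) (hx : 0 ≤ x)
    (hy : 0 ≤ y) : ENNReal.ofReal x • Measure.dirac a + ENNReal.ofReal y • Measure.dirac a
      = ENNReal.ofReal (x+y) • Measure.dirac a := by
  rw [ENNReal.ofReal_add hx hy, add_smul]

lemma c2_meas : Measurable fun p : ℝ × ℝ => c2 p.1 p.2 := by
  unfold c2; fun_prop


lemma pts_ne1 (a b : ℝ) (ha : 0 < a) (hb : 0 < b) :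
    ((a,b) : ℝ×ℝ) ∉ ({(a,-b), (-a,b), (-a,-b)} : Finset (ℝ×ℝ)) := by
  simp [Prod.ext_iff]
  constructor
  · intro h; linarith
  · constructor
    · intro h; linarith
    · intro h; linarith

lemma pts_ne2 (a b : ℝ) (ha : 0 < a) (hb : 0 < b) :
    ((a,-b) : ℝ×ℝ) ∉ ({(-a,b), (-a,-b)} : Finset (ℝ×ℝ)) := by
  simp [Prod.ext_iff]
  constructor <;> · intro h; linarith

lemma pts_ne3 (a b : ℝ) (ha : 0 < a) (hb : 0 < b) :
    ((-a,b) : ℝ×ℝ) ∉ ({((-a,-b) : ℝ×ℝ)} : Finset (ℝ×ℝ)) := by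
  simp [Prod.ext_iff]
  intro h; linarith

lemma mu2_prod_mu2 (a b : ℝ) (ha : 0 < a) (hb : 0 < b) :
    (mu2 a).prod (mu2 b) =
      ∑ s ∈ ({(a,b), (a,-b), (-a,b), (-a,-b)} : Finset (ℝ×ℝ)),
        ENNReal.ofReal (1/4 : ℝ) • Measure.dirac s := by
  rw [Finset.sum_insert (pts_ne1 a b ha hb), Finset.sum_insert (pts_ne2 a b ha hb),
    Finset.sum_insert (pts_ne3 a b ha hb), Finset.sum_singleton,
    ofReal_quarter, mu2, mu2, Measure.add_prod, smul_prod_meas, smul_prod_meas,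
    Measure.prod_add, Measure.prod_add, prod_smul_meas, prod_smul_meas, prod_smul_meas,
    prod_smul_meas, Measure.dirac_prod_dirac, Measure.dirac_prod_dirac,
    Measure.dirac_prod_dirac, Measure.dirac_prod_dirac, smul_add, smul_add,
    smul_smul, smul_smul, smul_smul, smul_smul,
    show ((1:ℝ≥0∞)/2) * (1/2) = 1/4 by
      rw [show ((1:ℝ≥0∞)/2) = 2⁻¹ by rw [one_div], show ((1:ℝ≥0∞)/4) = 4⁻¹ by rw [one_div],
        ← ENNReal.mul_inv (Or.inl (by norm_num)) (Or.inl (by norm_num))]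
      norm_num]
  abel

lemma rearrange4 (m1 m2 m3 m4 : Measure ℝ) : m1+(m2+(m3+m4)) = (m1+m3)+(m2+m4) := by abel

lemma entOT_dirac_dirac (ε : ℝ) (hε : 0 < ε) :
    entOT ε c2 (Measure.dirac 0) (Measure.dirac 0) = 0 := by
  have h := entOT_eq_gibbs ε hε c2 c2_meas ({((0:ℝ),(0:ℝ))} : Finset (ℝ×ℝ))
    (fun _ => (1:ℝ)) (fun s _ => one_pos) (by simp)
    (Measure.dirac 0) (Measure.dirac 0)
    (by rw [Finset.sum_singleton, ENNReal.ofReal_one, one_smul, Measure.dirac_prod_dirac])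
    1 (by simp [c2]) (by simp [c2]) (by simp [c2])
  rw [h, Real.log_one, mul_zero]

lemma entOT_dirac_mu2 (ε t : ℝ) (hε : 0 < ε) (ht : 0 < t) :
    entOT ε c2 (Measure.dirac 0) (mu2 t) = t^2 := by
  have hne : ((0:ℝ),t) ∉ ({((0:ℝ),-t)} : Finset (ℝ×ℝ)) := by
    simp [Prod.ext_iff]
    intro h
    linarith
  have hE := Real.exp_pos (-t^2/ε)
  have h := entOT_eq_gibbs ε hε c2 c2_meas ({((0:ℝ),t), ((0:ℝ),-t)} : Finset (ℝ×ℝ))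
    (fun _ => (1/2:ℝ)) (fun s _ => by norm_num)
    (by rw [Finset.sum_insert hne, Finset.sum_singleton]; norm_num)
    (Measure.dirac 0) (mu2 t)
    (by rw [Finset.sum_insert hne, Finset.sum_singleton, mu2, Measure.prod_add, prod_smul_meas,
        prod_smul_meas, Measure.dirac_prod_dirac, Measure.dirac_prod_dirac, ofReal_half])
    (Real.exp (-t^2/ε))
    (by rw [Finset.sum_insert hne, Finset.sum_singleton]
        simp only [c2]
        rw [show ((0:ℝ)-t)^2 = t^2 by ring, show ((0:ℝ)- -t)^2 = t^2 by ring]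
        ring)
    (by rw [Finset.sum_insert hne, Finset.sum_singleton]
        simp only [c2]
        rw [show ((0:ℝ)-t)^2 = t^2 by ring, show ((0:ℝ)- -t)^2 = t^2 by ring]
        rw [two_smul_dirac _ _ _ (by positivity) (by positivity)]
        rw [show 1/2 * rexp (-t^2/ε) / rexp (-t^2/ε) + 1/2 * rexp (-t^2/ε) / rexp (-t^2/ε)
          = 1 by field_simp; ring]
        rw [ENNReal.ofReal_one, one_smul])
    (by rw [Finset.sum_insert hne, Finset.sum_singleton]
        simp only [c2]
        rw [show ((0:ℝ)-t)^2 = t^2 by ring, show ((0:ℝ)- -t)^2 = t^2 by ring]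
        rw [show 1/2 * rexp (-t^2/ε) / rexp (-t^2/ε) = 1/2 by field_simp]
        rw [ofReal_half, mu2])
  rw [h, Real.log_exp]
  field_simp

lemma entOT_mu2_mu2_self (ε t : ℝ) (hε : 0 < ε) (ht : 0 < t) :
    entOT ε c2 (mu2 t) (mu2 t) = -ε * Real.log ((1 + Real.exp (-(4*t^2)/ε))/2) := by
  have hZne : ((1 + Real.exp (-(4*t^2)/ε))/2) ≠ 0 := by positivity
  exact entOT_eq_gibbs ε hε c2 c2_meas ({(t,t), (t,-t), (-t,t), (-t,-t)} : Finset (ℝ×ℝ))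
    (fun _ => (1/4:ℝ)) (fun s _ => by norm_num)
    (by rw [Finset.sum_insert (pts_ne1 t t ht ht), Finset.sum_insert (pts_ne2 t t ht ht),
          Finset.sum_insert (pts_ne3 t t ht ht), Finset.sum_singleton]; norm_num)
    (mu2 t) (mu2 t) (mu2_prod_mu2 t t ht ht)
    ((1 + Real.exp (-(4*t^2)/ε))/2)
    (by rw [Finset.sum_insert (pts_ne1 t t ht ht), Finset.sum_insert (pts_ne2 t t ht ht),
          Finset.sum_insert (pts_ne3 t t ht ht), Finset.sum_singleton]
        simp only [c2]
        rw [show (t-t:ℝ)^2 = 0 by ring, show (t - -t:ℝ)^2 = 4*t^2 by ring,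
          show (-t-t:ℝ)^2 = 4*t^2 by ring, show (-t - -t:ℝ)^2 = 0 by ring,
          show (-(0:ℝ)/ε) = 0 by ring, Real.exp_zero]
        ring)
    (by rw [Finset.sum_insert (pts_ne1 t t ht ht), Finset.sum_insert (pts_ne2 t t ht ht),
          Finset.sum_insert (pts_ne3 t t ht ht), Finset.sum_singleton]
        simp only [c2]
        rw [show (t-t:ℝ)^2 = 0 by ring, show (t - -t:ℝ)^2 = 4*t^2 by ring,
          show (-t-t:ℝ)^2 = 4*t^2 by ring, show (-t - -t:ℝ)^2 = 0 by ring,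
          show (-(0:ℝ)/ε) = 0 by ring, Real.exp_zero]
        rw [← add_assoc,
          two_smul_dirac t _ _ (by positivity) (by positivity),
          two_smul_dirac (-t) _ _ (by positivity) (by positivity),
          show 1/4 * 1 / ((1 + Real.exp (-(4*t^2)/ε))/2)
              + 1/4 * Real.exp (-(4*t^2)/ε) / ((1 + Real.exp (-(4*t^2)/ε))/2) = 1/2 by
            rw [← add_div, div_eq_iff hZne]; ring,
          show 1/4 * Real.exp (-(4*t^2)/ε) / ((1 + Real.exp (-(4*t^2)/ε))/2)
              + 1/4 * 1 / ((1 + Real.exp (-(4*t^2)/ε))/2) = 1/2 by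
            rw [← add_div, div_eq_iff hZne]; ring,
          ofReal_half, mu2])
    (by rw [Finset.sum_insert (pts_ne1 t t ht ht), Finset.sum_insert (pts_ne2 t t ht ht),
          Finset.sum_insert (pts_ne3 t t ht ht), Finset.sum_singleton]
        simp only [c2]
        rw [show (t-t:ℝ)^2 = 0 by ring, show (t - -t:ℝ)^2 = 4*t^2 by ring,
          show (-t-t:ℝ)^2 = 4*t^2 by ring, show (-t - -t:ℝ)^2 = 0 by ring,
          show (-(0:ℝ)/ε) = 0 by ring, Real.exp_zero]
        rw [rearrange4,
          two_smul_dirac t _ _ (by positivity) (by positivity),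
          two_smul_dirac (-t) _ _ (by positivity) (by positivity),
          show 1/4 * 1 / ((1 + Real.exp (-(4*t^2)/ε))/2)
              + 1/4 * Real.exp (-(4*t^2)/ε) / ((1 + Real.exp (-(4*t^2)/ε))/2) = 1/2 by
            rw [← add_div, div_eq_iff hZne]; ring,
          show 1/4 * Real.exp (-(4*t^2)/ε) / ((1 + Real.exp (-(4*t^2)/ε))/2)
              + 1/4 * 1 / ((1 + Real.exp (-(4*t^2)/ε))/2) = 1/2 by
            rw [← add_div, div_eq_iff hZne]; ring,
          ofReal_half, mu2])

lemma entOT_mu2_mu2_mix (ε t : ℝ) (hε : 0 < ε) (ht : 0 < t) :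
    entOT ε c2 (mu2 t) (mu2 (2*t)) =
      -ε * Real.log ((Real.exp (-(t^2)/ε) + Real.exp (-(9*t^2)/ε))/2) := by
  have h2t : (0:ℝ) < 2*t := by linarith
  have hZne : ((Real.exp (-(t^2)/ε) + Real.exp (-(9*t^2)/ε))/2) ≠ 0 := by positivity
  exact entOT_eq_gibbs ε hε c2 c2_meas
    ({(t,2*t), (t,-(2*t)), (-t,2*t), (-t,-(2*t))} : Finset (ℝ×ℝ))
    (fun _ => (1/4:ℝ)) (fun s _ => by norm_num)
    (by rw [Finset.sum_insert (pts_ne1 t (2*t) ht h2t), Finset.sum_insert (pts_ne2 t (2*t) ht h2t),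
          Finset.sum_insert (pts_ne3 t (2*t) ht h2t), Finset.sum_singleton]; norm_num)
    (mu2 t) (mu2 (2*t)) (mu2_prod_mu2 t (2*t) ht h2t)
    ((Real.exp (-(t^2)/ε) + Real.exp (-(9*t^2)/ε))/2)
    (by rw [Finset.sum_insert (pts_ne1 t (2*t) ht h2t), Finset.sum_insert (pts_ne2 t (2*t) ht h2t),
          Finset.sum_insert (pts_ne3 t (2*t) ht h2t), Finset.sum_singleton]
        simp only [c2]
        rw [show (t-2*t:ℝ)^2 = t^2 by ring, show (t - -(2*t):ℝ)^2 = 9*t^2 by ring,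
          show (-t-2*t:ℝ)^2 = 9*t^2 by ring, show (-t - -(2*t):ℝ)^2 = t^2 by ring]
        ring)
    (by rw [Finset.sum_insert (pts_ne1 t (2*t) ht h2t), Finset.sum_insert (pts_ne2 t (2*t) ht h2t),
          Finset.sum_insert (pts_ne3 t (2*t) ht h2t), Finset.sum_singleton]
        simp only [c2]
        rw [show (t-2*t:ℝ)^2 = t^2 by ring, show (t - -(2*t):ℝ)^2 = 9*t^2 by ring,
          show (-t-2*t:ℝ)^2 = 9*t^2 by ring, show (-t - -(2*t):ℝ)^2 = t^2 by ring]
        rw [← add_assoc,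
          two_smul_dirac t _ _ (by positivity) (by positivity),
          two_smul_dirac (-t) _ _ (by positivity) (by positivity),
          show 1/4 * Real.exp (-(t^2)/ε) / ((Real.exp (-(t^2)/ε) + Real.exp (-(9*t^2)/ε))/2)
              + 1/4 * Real.exp (-(9*t^2)/ε) / ((Real.exp (-(t^2)/ε) + Real.exp (-(9*t^2)/ε))/2)
              = 1/2 by
            rw [← add_div, div_eq_iff hZne]; ring,
          show 1/4 * Real.exp (-(9*t^2)/ε) / ((Real.exp (-(t^2)/ε) + Real.exp (-(9*t^2)/ε))/2)
              + 1/4 * Real.exp (-(t^2)/ε) / ((Real.exp (-(t^2)/ε) + Real.exp (-(9*t^2)/ε))/2)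
              = 1/2 by
            rw [← add_div, div_eq_iff hZne]; ring,
          ofReal_half, mu2])
    (by rw [Finset.sum_insert (pts_ne1 t (2*t) ht h2t), Finset.sum_insert (pts_ne2 t (2*t) ht h2t),
          Finset.sum_insert (pts_ne3 t (2*t) ht h2t), Finset.sum_singleton]
        simp only [c2]
        rw [show (t-2*t:ℝ)^2 = t^2 by ring, show (t - -(2*t):ℝ)^2 = 9*t^2 by ring,
          show (-t-2*t:ℝ)^2 = 9*t^2 by ring, show (-t - -(2*t):ℝ)^2 = t^2 by ring]
        rw [rearrange4,
          two_smul_dirac (2*t) _ _ (by positivity) (by positivity),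
          two_smul_dirac (-(2*t)) _ _ (by positivity) (by positivity),
          show 1/4 * Real.exp (-(t^2)/ε) / ((Real.exp (-(t^2)/ε) + Real.exp (-(9*t^2)/ε))/2)
              + 1/4 * Real.exp (-(9*t^2)/ε) / ((Real.exp (-(t^2)/ε) + Real.exp (-(9*t^2)/ε))/2)
              = 1/2 by
            rw [← add_div, div_eq_iff hZne]; ring,
          show 1/4 * Real.exp (-(9*t^2)/ε) / ((Real.exp (-(t^2)/ε) + Real.exp (-(9*t^2)/ε))/2)
              + 1/4 * Real.exp (-(t^2)/ε) / ((Real.exp (-(t^2)/ε) + Real.exp (-(9*t^2)/ε))/2)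
              = 1/2 by
            rw [← add_div, div_eq_iff hZne]; ring,
          ofReal_half, mu2])


lemma exp_neg_four_le : Real.exp (-4) ≤ 1/50 := by
  have h1 : (2.7:ℝ) < Real.exp 1 := by
    have := Real.exp_one_gt_d9
    norm_num at this ⊢
    linarith
  have h4 : (50:ℝ) < Real.exp 4 := by
    have he : Real.exp 4 = (Real.exp 1)^(4:ℕ) := by
      rw [← Real.exp_nat_mul]
      norm_num
    rw [he]
    have h2 : (2.7:ℝ)^(4:ℕ) < (Real.exp 1)^(4:ℕ) :=
      pow_lt_pow_left₀ h1 (by norm_num) (by norm_num)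
    nlinarith [h2]
  have hid : Real.exp (-4) * Real.exp 4 = 1 := by
    rw [← Real.exp_add]
    norm_num
  nlinarith [Real.exp_pos (-4), h4, hid]

lemma numeric_core :
    Real.sqrt (1 + (1/2) * Real.log ((1+Real.exp (-4))/2))
      + Real.sqrt (-Real.log ((Real.exp (-1)+Real.exp (-9))/2)
        + (1/2)*Real.log ((1+Real.exp (-4))/2) + (1/2)*Real.log ((1+Real.exp (-16))/2))
      < Real.sqrt (4 + (1/2) * Real.log ((1+Real.exp (-16))/2)) := by
  set A : ℝ := 1 + (1/2) * Real.log ((1+Real.exp (-4))/2) with hA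
  set B : ℝ := -Real.log ((Real.exp (-1)+Real.exp (-9))/2)
        + (1/2)*Real.log ((1+Real.exp (-4))/2) + (1/2)*Real.log ((1+Real.exp (-16))/2) with hB
  set X : ℝ := 4 + (1/2) * Real.log ((1+Real.exp (-16))/2) with hX
  have he4 : Real.exp (-4) ≤ 1/50 := exp_neg_four_le
  have he16 : Real.exp (-16) ≤ 1/50 :=
    le_trans (Real.exp_le_exp.mpr (by norm_num)) exp_neg_four_le
  have he9 : Real.exp (-9) ≤ 1/50 :=
    le_trans (Real.exp_le_exp.mpr (by norm_num)) exp_neg_four_le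
  have he1 : Real.exp (-1) ≤ 1/2 := by
    have h1 := Real.exp_one_gt_d9
    have hid : Real.exp (-1) * Real.exp 1 = 1 := by
      rw [← Real.exp_add]
      norm_num
    nlinarith [Real.exp_pos (-1)]
  have hl2l : (0.6931471803:ℝ) < Real.log 2 := Real.log_two_gt_d9
  have hl2u : Real.log 2 < 0.6931471808 := Real.log_two_lt_d9
  have hhalf : Real.log (1/2 : ℝ) = - Real.log 2 := by
    rw [one_div, Real.log_inv]
  -- bounds for log((1+e)/2)
  have hL4 : Real.log ((1+Real.exp (-4))/2) = Real.log (1+Real.exp (-4)) - Real.log 2 :=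
    Real.log_div (by positivity) (by norm_num)
  have hL16 : Real.log ((1+Real.exp (-16))/2) = Real.log (1+Real.exp (-16)) - Real.log 2 :=
    Real.log_div (by positivity) (by norm_num)
  have hL4u : Real.log (1+Real.exp (-4)) ≤ Real.exp (-4) := by
    have := Real.log_le_sub_one_of_pos (x := 1+Real.exp (-4)) (by positivity)
    linarith
  have hL16u : Real.log (1+Real.exp (-16)) ≤ Real.exp (-16) := by
    have := Real.log_le_sub_one_of_pos (x := 1+Real.exp (-16)) (by positivity)
    linarith
  have hL4l : 0 ≤ Real.log (1+Real.exp (-4)) := by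
    apply Real.log_nonneg
    have := (Real.exp_pos (-4)).le
    linarith
  have hL16l : 0 ≤ Real.log (1+Real.exp (-16)) := by
    apply Real.log_nonneg
    have := (Real.exp_pos (-16)).le
    linarith
  -- bounds for the mixed log
  have hmixl : -1 - Real.log 2 ≤ Real.log ((Real.exp (-1)+Real.exp (-9))/2) := by
    have h1 : Real.log (Real.exp (-1)/2) ≤ Real.log ((Real.exp (-1)+Real.exp (-9))/2) := by
      apply Real.log_le_log (by positivity)
      have := (Real.exp_pos (-9)).le
      linarith
    have h2 : Real.log (Real.exp (-1)/2) = -1 - Real.log 2 := by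
      rw [Real.log_div (Real.exp_pos _).ne' (by norm_num), Real.log_exp]
    linarith
  have hmixu : Real.log ((Real.exp (-1)+Real.exp (-9))/2) ≤ - Real.log 2 := by
    have h1 : Real.log ((Real.exp (-1)+Real.exp (-9))/2) ≤ Real.log (1/2 : ℝ) := by
      apply Real.log_le_log (by positivity)
      linarith [he9, he1]
    linarith [hhalf ▸ h1]
  have hA0 : 0 ≤ A := by
    rw [hA, hL4]
    linarith
  have hB0 : 0 ≤ B := by
    rw [hB, hL4, hL16]
    linarith [hmixu]
  have hkey : 2*(A+B) < X := by
    rw [hA, hB, hX, hL4, hL16]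
    linarith [hmixl, hL4u, hL16u, he4, he16, hl2l, hL16l, hL4l]
  have hs2 : (Real.sqrt A + Real.sqrt B)^2 ≤ 2*(A+B) := by
    nlinarith [Real.sq_sqrt hA0, Real.sq_sqrt hB0, sq_nonneg (Real.sqrt A - Real.sqrt B),
      Real.sqrt_nonneg A, Real.sqrt_nonneg B]
  exact (Real.lt_sqrt (by positivity)).mpr (lt_of_le_of_lt hs2 hkey)

/-- **Failure of the triangle inequality for `√S_ε`.** For every `ε > 0`, with `r = √ε`
and `μ_t = (1/2)δ_t + (1/2)δ_{−t}` one has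
`√(S_ε(δ_0, μ_{2r})) > √(S_ε(δ_0, μ_r)) + √(S_ε(μ_r, μ_{2r}))` for the quadratic cost. -/
theorem stmt7 (ε : ℝ) (hε : 0 < ε) :
    Real.sqrt (sinkhorn ε c2 (Measure.dirac (0 : ℝ)) (mu2 (2 * Real.sqrt ε))) >
      Real.sqrt (sinkhorn ε c2 (Measure.dirac (0 : ℝ)) (mu2 (Real.sqrt ε)))
        + Real.sqrt (sinkhorn ε c2 (mu2 (Real.sqrt ε)) (mu2 (2 * Real.sqrt ε))) := by
  set r : ℝ := Real.sqrt ε with hrdef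
  have hr : 0 < r := Real.sqrt_pos.mpr hε
  have hr2 : r^2 = ε := Real.sq_sqrt hε.le
  have h2r : (0:ℝ) < 2*r := by linarith
  have h00 := entOT_dirac_dirac ε hε
  have h01 : entOT ε c2 (Measure.dirac 0) (mu2 r) = ε := by
    rw [entOT_dirac_mu2 ε r hε hr, hr2]
  have h02 : entOT ε c2 (Measure.dirac 0) (mu2 (2*r)) = 4*ε := by
    rw [entOT_dirac_mu2 ε (2*r) hε h2r, mul_pow, hr2]
    norm_num
  have h11 : entOT ε c2 (mu2 r) (mu2 r) = -ε * Real.log ((1 + Real.exp (-4))/2) := by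
    rw [entOT_mu2_mu2_self ε r hε hr,
      show -(4*r^2)/ε = (-4:ℝ) by rw [hr2, div_eq_iff hε.ne']; ring]
  have h22 : entOT ε c2 (mu2 (2*r)) (mu2 (2*r)) = -ε * Real.log ((1 + Real.exp (-16))/2) := by
    rw [entOT_mu2_mu2_self ε (2*r) hε h2r,
      show -(4*(2*r)^2)/ε = (-16:ℝ) by rw [mul_pow, hr2, div_eq_iff hε.ne']; ring]
  have h12 : entOT ε c2 (mu2 r) (mu2 (2*r))
      = -ε * Real.log ((Real.exp (-1) + Real.exp (-9))/2) := by
    rw [entOT_mu2_mu2_mix ε r hε hr,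
      show -(r^2)/ε = (-1:ℝ) by rw [hr2, div_eq_iff hε.ne']; ring,
      show -(9*r^2)/ε = (-9:ℝ) by rw [hr2, div_eq_iff hε.ne']; ring]
  have hS02 : sinkhorn ε c2 (Measure.dirac 0) (mu2 (2*r))
      = ε * (4 + (1/2) * Real.log ((1+Real.exp (-16))/2)) := by
    rw [sinkhorn, h02, h00, h22]
    ring
  have hS01 : sinkhorn ε c2 (Measure.dirac 0) (mu2 r)
      = ε * (1 + (1/2) * Real.log ((1+Real.exp (-4))/2)) := by
    rw [sinkhorn, h01, h00, h11]
    ring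
  have hS12 : sinkhorn ε c2 (mu2 r) (mu2 (2*r))
      = ε * (-Real.log ((Real.exp (-1)+Real.exp (-9))/2)
        + (1/2)*Real.log ((1+Real.exp (-4))/2) + (1/2)*Real.log ((1+Real.exp (-16))/2)) := by
    rw [sinkhorn, h12, h11, h22]
    ring
  rw [hS02, hS01, hS12, Real.sqrt_mul hε.le, Real.sqrt_mul hε.le, Real.sqrt_mul hε.le,
    ← mul_add]
  have hsε : 0 < Real.sqrt ε := Real.sqrt_pos.mpr hε
  exact mul_lt_mul_of_pos_left numeric_core hsε
end
end

section
/- Let μ₀, μ₁ be compactly supported Borel probability measures on ℝ^d with means m₀, m₁ and centered versions μ̄₀, μ̄₁, and take the quadratic cost c(x,y) = ‖x−y‖². Then for every ε > 0 the Sinkhorn divergence decomposes as S_ε(μ₀, μ₁) = ‖m₁ − m₀‖² + S_ε(μ̄₀, μ̄₁). -/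
open MeasureTheory Filter Topology Real
open scoped ENNReal RealInnerProductSpace

noncomputable section

/-- The mean `m(μ) = ∫ x dμ(x)` of a measure on `ℝ^d`. -/
noncomputable def meanOf {d : ℕ} (μ : Measure (EuclideanSpace ℝ (Fin d))) :
    EuclideanSpace ℝ (Fin d) :=
  ∫ x, x ∂μ

/-- The centered version `μ̄` of `μ`: the pushforward of `μ` under `x ↦ x − m(μ)`. -/
noncomputable def centered {d : ℕ} (μ : Measure (EuclideanSpace ℝ (Fin d))) :
    Measure (EuclideanSpace ℝ (Fin d)) :=
  μ.map fun x => x - meanOf μ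

/-- The quadratic cost on `ℝ^d`. -/
noncomputable def cQuad {d : ℕ} : EuclideanSpace ℝ (Fin d) → EuclideanSpace ℝ (Fin d) → ℝ :=
  fun x y => ‖x - y‖ ^ 2

/-! ### Auxiliary lemmas -/

/-- The feasible set in the definition of `entOT`. -/
def entSet {X : Type*} [MeasurableSpace X] (ε : ℝ) (c : X → X → ℝ) (μ ν : Measure X) : Set ℝ :=
  { v : ℝ | ∃ γ : Measure (X × X), IsProbabilityMeasure γ ∧ IsCoupling μ ν γ ∧
    γ ≪ μ.prod ν ∧
    Integrable (fun p => Real.log ((γ.rnDeriv (μ.prod ν)) p).toReal) γ ∧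
    v = (∫ p, c p.1 p.2 ∂γ) + ε * ∫ p, Real.log ((γ.rnDeriv (μ.prod ν)) p).toReal ∂γ }

lemma entOT_eq {X : Type*} [MeasurableSpace X] (ε : ℝ) (c : X → X → ℝ) (μ ν : Measure X) :
    entOT ε c μ ν = sInf (entSet ε c μ ν) := rfl

lemma integrable_of_null_compl_s11 {α E : Type*} [MeasurableSpace α] [TopologicalSpace α]
    [OpensMeasurableSpace α] [NormedAddCommGroup E] [SecondCountableTopologyEither α E]
    {γ : Measure α} [IsFiniteMeasure γ]
    {K : Set α} (hK : IsCompact K) (hγK : γ Kᶜ = 0) {f : α → E} (hf : Continuous f) :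
    Integrable f γ := by
  obtain ⟨C, hC⟩ := (hK.image (continuous_norm.comp hf)).bddAbove
  refine Integrable.mono' (integrable_const C) hf.aestronglyMeasurable ?_
  have hae : ∀ᵐ x ∂γ, x ∈ K := by
    rw [ae_iff]
    exact hγK
  filter_upwards [hae] with x hx
  exact hC ⟨x, hx, rfl⟩

/-- Gibbs' inequality: the Kullback–Leibler divergence is nonnegative. -/
lemma gibbs {α : Type*} [MeasurableSpace α] (γ ρ : Measure α) [IsProbabilityMeasure γ]
    [IsProbabilityMeasure ρ] (hAC : γ ≪ ρ)
    (hInt : Integrable (fun x => Real.log ((γ.rnDeriv ρ) x).toReal) γ) :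
    0 ≤ ∫ x, Real.log ((γ.rnDeriv ρ) x).toReal ∂γ := by
  set w := γ.rnDeriv ρ with hw
  set f : α → ℝ := fun x => (w x).toReal with hf
  set g : α → ℝ := fun x => -Real.log (f x) + 1 with hg
  have hwm : Measurable w := Measure.measurable_rnDeriv γ ρ
  have hfm : Measurable f := hwm.ennreal_toReal
  have hInt' : Integrable g γ := (hInt.neg.add (integrable_const 1))
  have h1 : ∀ᵐ x ∂γ, 0 < w x := Measure.rnDeriv_pos hAC
  have h2 : ∀ᵐ x ∂γ, w x < ∞ := hAC.ae_le (Measure.rnDeriv_lt_top γ ρ)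
  have hpt : ∀ᵐ x ∂γ, ENNReal.ofReal (g x) ≤ ENNReal.ofReal ((f x)⁻¹) := by
    filter_upwards [h1, h2] with x hx1 hx2
    have hfx : 0 < f x := ENNReal.toReal_pos hx1.ne' hx2.ne
    refine ENNReal.ofReal_le_ofReal ?_
    have := Real.log_le_sub_one_of_pos (inv_pos.2 hfx)
    rw [Real.log_inv] at this
    simp only [hg]
    linarith
  have hB : ∫⁻ x, ENNReal.ofReal ((f x)⁻¹) ∂γ ≤ 1 := by
    have hγeq : γ = ρ.withDensity w := (Measure.withDensity_rnDeriv_eq γ ρ hAC).symm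
    have hgm : Measurable fun x => ENNReal.ofReal ((f x)⁻¹) := hfm.inv.ennreal_ofReal
    calc ∫⁻ x, ENNReal.ofReal ((f x)⁻¹) ∂γ
        = ∫⁻ x, (w * fun x => ENNReal.ofReal ((f x)⁻¹)) x ∂ρ := by
          conv_lhs => rw [hγeq]
          exact lintegral_withDensity_eq_lintegral_mul ρ hwm hgm
      _ ≤ ∫⁻ _, 1 ∂ρ := by
          refine lintegral_mono_ae ?_
          filter_upwards [Measure.rnDeriv_lt_top γ ρ] with x hx
          simp only [Pi.mul_apply]
          rcases eq_or_ne (w x) 0 with h0 | h0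
          · simp [h0]
          · have hpos : 0 < f x := ENNReal.toReal_pos h0 hx.ne
            rw [hf, ENNReal.ofReal_inv_of_pos hpos, ENNReal.ofReal_toReal hx.ne,
              ENNReal.mul_inv_cancel h0 hx.ne]
      _ = 1 := by simp
  have hA : ∫⁻ x, ENNReal.ofReal (g x) ∂γ ≤ 1 := le_trans (lintegral_mono_ae hpt) hB
  have hgle : ∫ x, g x ∂γ ≤ 1 := by
    rw [integral_eq_lintegral_pos_part_sub_lintegral_neg_part hInt']
    have ht : (∫⁻ x, ENNReal.ofReal (g x) ∂γ).toReal ≤ 1 := by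
      have := ENNReal.toReal_mono ENNReal.one_ne_top hA
      simpa using this
    have : 0 ≤ (∫⁻ x, ENNReal.ofReal (-(g x)) ∂γ).toReal := ENNReal.toReal_nonneg
    linarith
  have hsum : ∫ x, g x ∂γ = -∫ x, Real.log (f x) ∂γ + 1 := by
    have h0 : ∫ x, g x ∂γ = ∫ x, (-Real.log (f x) + 1) ∂γ := rfl
    have hnegInt : Integrable (fun x => -Real.log (f x)) γ := hInt.neg
    rw [h0, integral_add hnegInt (integrable_const 1), integral_neg, integral_const]
    simp
  rw [hsum] at hgle
  linarith

variable {d : ℕ}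

local notation "X" => EuclideanSpace ℝ (Fin d)

lemma coupling_null_compl {μ ν : Measure X} {γ : Measure (X × X)}
    (hγ : IsCoupling μ ν γ) {K L : Set X} (hK : IsCompact K) (hL : IsCompact L)
    (hμ : μ Kᶜ = 0) (hν : ν Lᶜ = 0) : γ (K ×ˢ L)ᶜ = 0 := by
  have hsub : (K ×ˢ L)ᶜ ⊆ (Prod.fst ⁻¹' Kᶜ) ∪ (Prod.snd ⁻¹' Lᶜ) := by
    intro p hp
    by_contra h
    simp only [Set.mem_union, Set.mem_preimage, Set.mem_compl_iff, not_or, not_not] at h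
    exact hp ⟨h.1, h.2⟩
  refine measure_mono_null hsub (measure_union_null ?_ ?_)
  · have : γ (Prod.fst ⁻¹' Kᶜ) = (γ.map Prod.fst) Kᶜ := by
      rw [Measure.map_apply measurable_fst hK.isClosed.measurableSet.compl]
    rw [this, hγ.1, hμ]
  · have : γ (Prod.snd ⁻¹' Lᶜ) = (γ.map Prod.snd) Lᶜ := by
      rw [Measure.map_apply measurable_snd hL.isClosed.measurableSet.compl]
    rw [this, hγ.2, hν]

def subEquiv (a : X) : X ≃ᵐ X :=
  { Equiv.subRight a with
    measurable_toFun := measurable_id.sub measurable_const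
    measurable_invFun := measurable_id.add measurable_const }

lemma map_null_compl (μ : Measure X) {K : Set X} (hK : IsCompact K) (hμ : μ Kᶜ = 0) (a : X) :
    ∃ K' : Set X, IsCompact K' ∧ (μ.map (fun x => x - a)) K'ᶜ = 0 := by
  have hm : Measurable fun x : X => x - a := by fun_prop
  have hK' : IsCompact ((fun x : X => x - a) '' K) := hK.image (by fun_prop)
  refine ⟨(fun x => x - a) '' K, hK', ?_⟩
  rw [Measure.map_apply hm hK'.isClosed.measurableSet.compl]
  refine measure_mono_null ?_ hμ
  intro x hx
  simp only [Set.mem_preimage, Set.mem_compl_iff] at hx ⊢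
  exact fun hxK => hx ⟨x, hxK, rfl⟩

lemma meanOf_map_sub (μ : Measure X) [IsProbabilityMeasure μ]
    (h : Integrable (fun x : X => x) μ) (a : X) :
    meanOf (μ.map (fun x => x - a)) = meanOf μ - a := by
  have hm : Measurable fun x : X => x - a := by fun_prop
  unfold meanOf
  have h0 : ∫ (x : X), x ∂Measure.map (fun x => x - a) μ = ∫ x, (x - a) ∂μ :=
    integral_map hm.aemeasurable aestronglyMeasurable_id
  rw [h0, integral_sub h (integrable_const a), integral_const]
  simp

lemma entSet_nonempty (ε : ℝ) (μ ν : Measure X) [IsProbabilityMeasure μ]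
    [IsProbabilityMeasure ν] : (entSet ε cQuad μ ν).Nonempty := by
  refine ⟨_, μ.prod ν, inferInstance, ⟨?_, ?_⟩, Measure.AbsolutelyContinuous.rfl, ?_, rfl⟩
  · rw [Measure.map_fst_prod]; simp
  · rw [Measure.map_snd_prod]; simp
  · refine (integrable_const (0:ℝ)).congr ?_
    filter_upwards [Measure.rnDeriv_self (μ.prod ν)] with p hp
    simp [hp]

lemma entSet_bddBelow (ε : ℝ) (hε : 0 < ε) (μ ν : Measure X) [IsProbabilityMeasure μ]
    [IsProbabilityMeasure ν] : BddBelow (entSet ε cQuad μ ν) := by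
  refine ⟨0, fun v hv => ?_⟩
  obtain ⟨γ, hprob, hcoup, hAC, hInt, hv⟩ := hv
  have h1 : 0 ≤ ∫ p, cQuad p.1 p.2 ∂γ :=
    integral_nonneg fun p => by simp only [cQuad]; positivity
  have h2 : 0 ≤ ∫ p, Real.log ((γ.rnDeriv (μ.prod ν)) p).toReal ∂γ := gibbs γ _ hAC hInt
  rw [hv]
  have := mul_nonneg hε.le h2
  linarith

lemma mem_entSet_shift (ε : ℝ) (μ ν : Measure X) [IsProbabilityMeasure μ] [IsProbabilityMeasure ν]
    {Kμ Kν : Set X} (hKμ : IsCompact Kμ) (hKν : IsCompact Kν)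
    (hμK : μ Kμᶜ = 0) (hνK : ν Kνᶜ = 0) (a b : X) {v : ℝ} (hv : v ∈ entSet ε cQuad μ ν) :
    v + (-(2 * ⟪meanOf μ - meanOf ν, a - b⟫) + ‖a - b‖ ^ 2)
      ∈ entSet ε cQuad (μ.map (fun x => x - a)) (ν.map (fun x => x - b)) := by
  obtain ⟨γ, hprob, hcoup, hAC, hInt, hveq⟩ := hv
  have hma : Measurable fun x : X => x - a := by fun_prop
  have hmb : Measurable fun x : X => x - b := by fun_prop
  set T : (X × X) ≃ᵐ (X × X) := (subEquiv a).prodCongr (subEquiv b) with hT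
  set ρ := μ.prod ν with hρ
  set μ' := μ.map (fun x => x - a) with hμ'
  set ν' := ν.map (fun x => x - b) with hν'
  haveI : IsProbabilityMeasure μ' := Measure.isProbabilityMeasure_map hma.aemeasurable
  haveI : IsProbabilityMeasure ν' := Measure.isProbabilityMeasure_map hmb.aemeasurable
  haveI : IsProbabilityMeasure (γ.map T) := Measure.isProbabilityMeasure_map T.measurable.aemeasurable
  have hρ' : μ'.prod ν' = ρ.map T := by
    rw [hμ', hν', Measure.map_prod_map _ _ hma hmb]
    rfl
  have hemb := T.measurableEmbedding
  have h_rn : (fun p => (γ.map T).rnDeriv (ρ.map T) (T p)) =ᵐ[ρ] γ.rnDeriv ρ :=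
    hemb.rnDeriv_map γ ρ
  have h_rnγ : (fun p => (γ.map T).rnDeriv (ρ.map T) (T p)) =ᵐ[γ] γ.rnDeriv ρ :=
    h_rn.filter_mono hAC.ae_le
  -- integrability facts for γ
  have hγnull : γ (Kμ ×ˢ Kν)ᶜ = 0 := coupling_null_compl hcoup hKμ hKν hμK hνK
  have hKprod : IsCompact (Kμ ×ˢ Kν) := hKμ.prod hKν
  set w : X := a - b with hwdef
  have hi1 : Integrable (fun p : X × X => ‖p.1 - p.2‖ ^ 2) γ :=
    integrable_of_null_compl_s11 hKprod hγnull
      (((continuous_fst.sub continuous_snd).norm).pow 2)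
  have hi2 : Integrable (fun p : X × X => ⟪p.1 - p.2, w⟫) γ :=
    integrable_of_null_compl_s11 hKprod hγnull
      ((continuous_fst.sub continuous_snd).inner continuous_const)
  have hifst : Integrable (fun p : X × X => p.1) γ :=
    integrable_of_null_compl_s11 hKprod hγnull continuous_fst
  have hisnd : Integrable (fun p : X × X => p.2) γ :=
    integrable_of_null_compl_s11 hKprod hγnull continuous_snd
  have hmean : ∫ p : X × X, (p.1 - p.2) ∂γ = meanOf μ - meanOf ν := by
    rw [integral_sub hifst hisnd]
    have e1 : ∫ p : X × X, p.1 ∂γ = meanOf μ := by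
      rw [← hcoup.1]
      exact (integral_map measurable_fst.aemeasurable aestronglyMeasurable_id).symm
    have e2 : ∫ p : X × X, p.2 ∂γ = meanOf ν := by
      rw [← hcoup.2]
      exact (integral_map measurable_snd.aemeasurable aestronglyMeasurable_id).symm
    rw [e1, e2]
  have hinner : ∫ p : X × X, ⟪p.1 - p.2, w⟫ ∂γ = ⟪meanOf μ - meanOf ν, w⟫ := by
    have : ∀ p : X × X, ⟪p.1 - p.2, w⟫ = ⟪w, p.1 - p.2⟫ := fun p => real_inner_comm _ _
    simp_rw [this]
    have hsubInt : Integrable (fun p : X × X => p.1 - p.2) γ :=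
      integrable_of_null_compl_s11 hKprod hγnull (continuous_fst.sub continuous_snd)
    rw [integral_inner hsubInt w, ← hmean]
    exact real_inner_comm _ _
  -- cost identity
  have hcost : ∫ q, cQuad q.1 q.2 ∂(γ.map T)
      = (∫ p, cQuad p.1 p.2 ∂γ) + (-(2 * ⟪meanOf μ - meanOf ν, w⟫) + ‖w‖ ^ 2) := by
    have e0 : ∫ q, cQuad q.1 q.2 ∂(γ.map T) = ∫ p : X × X, cQuad (T p).1 (T p).2 ∂γ :=
      integral_map_equiv T _
    have e1 : ∀ p : X × X, cQuad (T p).1 (T p).2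
        = ‖p.1 - p.2‖ ^ 2 - 2 * ⟪p.1 - p.2, w⟫ + ‖w‖ ^ 2 := by
      intro p
      have hTp : (T p).1 = p.1 - a ∧ (T p).2 = p.2 - b := ⟨rfl, rfl⟩
      rw [cQuad, hTp.1, hTp.2]
      have harg : (p.1 - a) - (p.2 - b) = (p.1 - p.2) - w := by
        rw [hwdef]; abel
      rw [harg, norm_sub_sq_real]
    have hi2' : Integrable (fun p : X × X => 2 * ⟪p.1 - p.2, w⟫) γ := hi2.const_mul 2
    have hiS : Integrable (fun p : X × X => ‖p.1 - p.2‖ ^ 2 - 2 * ⟪p.1 - p.2, w⟫) γ :=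
      hi1.sub hi2'
    rw [e0]
    calc ∫ p : X × X, cQuad (T p).1 (T p).2 ∂γ
        = ∫ p : X × X, (‖p.1 - p.2‖ ^ 2 - 2 * ⟪p.1 - p.2, w⟫ + ‖w‖ ^ 2) ∂γ := by
          exact integral_congr_ae (Filter.Eventually.of_forall e1)
      _ = (∫ p : X × X, (‖p.1 - p.2‖ ^ 2 - 2 * ⟪p.1 - p.2, w⟫) ∂γ) + ‖w‖ ^ 2 := by
          rw [integral_add hiS (integrable_const _), integral_const]
          simp
      _ = (∫ p, cQuad p.1 p.2 ∂γ) + (-(2 * ⟪meanOf μ - meanOf ν, w⟫) + ‖w‖ ^ 2) := by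
          rw [integral_sub hi1 hi2', integral_const_mul, hinner]
          simp only [cQuad]
          ring
  refine ⟨γ.map T, inferInstance, ⟨?_, ?_⟩, ?_, ?_, ?_⟩
  · calc (γ.map T).map Prod.fst = γ.map (Prod.fst ∘ T) :=
        Measure.map_map measurable_fst T.measurable
    _ = γ.map ((fun x : X => x - a) ∘ Prod.fst) := rfl
    _ = (γ.map Prod.fst).map (fun x : X => x - a) := (Measure.map_map hma measurable_fst).symm
    _ = μ' := by rw [hcoup.1]
  · calc (γ.map T).map Prod.snd = γ.map (Prod.snd ∘ T) :=
        Measure.map_map measurable_snd T.measurable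
    _ = γ.map ((fun x : X => x - b) ∘ Prod.snd) := rfl
    _ = (γ.map Prod.snd).map (fun x : X => x - b) := (Measure.map_map hmb measurable_snd).symm
    _ = ν' := by rw [hcoup.2]
  · rw [hρ']
    exact hAC.map T.measurable
  · rw [hρ']
    rw [integrable_map_equiv T]
    refine hInt.congr ?_
    filter_upwards [h_rnγ] with p hp
    simp only [Function.comp_apply]
    rw [hp]
  · have hlog : ∫ q, Real.log (((γ.map T).rnDeriv (μ'.prod ν')) q).toReal ∂(γ.map T)
        = ∫ p, Real.log ((γ.rnDeriv ρ) p).toReal ∂γ := by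
      rw [hρ', integral_map_equiv T]
      refine integral_congr_ae ?_
      filter_upwards [h_rnγ] with p hp
      rw [hp]
    rw [hlog, hcost, hveq]
    ring

lemma entOT_shift (ε : ℝ) (hε : 0 < ε) (μ ν : Measure X) [IsProbabilityMeasure μ]
    [IsProbabilityMeasure ν] (hμ : ∃ K, IsCompact K ∧ μ Kᶜ = 0)
    (hν : ∃ K, IsCompact K ∧ ν Kᶜ = 0) (a b : X) :
    entOT ε cQuad (μ.map (fun x => x - a)) (ν.map (fun x => x - b))
      = entOT ε cQuad μ ν + (-(2 * ⟪meanOf μ - meanOf ν, a - b⟫) + ‖a - b‖ ^ 2) := by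
  obtain ⟨Kμ, hKμ, hμK⟩ := hμ
  obtain ⟨Kν, hKν, hνK⟩ := hν
  have hma : Measurable fun x : X => x - a := by fun_prop
  have hmb : Measurable fun x : X => x - b := by fun_prop
  haveI : IsProbabilityMeasure (μ.map (fun x => x - a)) :=
    Measure.isProbabilityMeasure_map hma.aemeasurable
  haveI : IsProbabilityMeasure (ν.map (fun x => x - b)) :=
    Measure.isProbabilityMeasure_map hmb.aemeasurable
  set c : ℝ := -(2 * ⟪meanOf μ - meanOf ν, a - b⟫) + ‖a - b‖ ^ 2 with hc
  have hset : entSet ε cQuad (μ.map (fun x => x - a)) (ν.map (fun x => x - b))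
      = (fun v => v + c) '' entSet ε cQuad μ ν := by
    apply Set.Subset.antisymm
    · intro v' hv'
      obtain ⟨Kμ', hKμ', hμK'⟩ := map_null_compl μ hKμ hμK a
      obtain ⟨Kν', hKν', hνK'⟩ := map_null_compl ν hKν hνK b
      have key := mem_entSet_shift ε (μ.map (fun x => x - a)) (ν.map (fun x => x - b))
        hKμ' hKν' hμK' hνK' (-a) (-b) hv'
      have hμback : (μ.map (fun x => x - a)).map (fun x => x - (-a)) = μ := by
        rw [Measure.map_map (by fun_prop) hma]
        have hcomp : ((fun x : X => x - (-a)) ∘ (fun x : X => x - a)) = id := by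
          funext x; simp
        rw [hcomp, Measure.map_id]
      have hνback : (ν.map (fun x => x - b)).map (fun x => x - (-b)) = ν := by
        rw [Measure.map_map (by fun_prop) hmb]
        have hcomp : ((fun x : X => x - (-b)) ∘ (fun x : X => x - b)) = id := by
          funext x; simp
        rw [hcomp, Measure.map_id]
      rw [hμback, hνback] at key
      refine ⟨_, key, ?_⟩
      have hIμ : Integrable (fun x : X => x) μ := integrable_of_null_compl_s11 hKμ hμK continuous_id
      have hIν : Integrable (fun x : X => x) ν := integrable_of_null_compl_s11 hKν hνK continuous_id
      rw [meanOf_map_sub μ hIμ a, meanOf_map_sub ν hIν b]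
      have h1 : (-a : X) - (-b) = -(a - b) := by abel
      have h2 : (meanOf μ - a) - (meanOf ν - b) = (meanOf μ - meanOf ν) - (a - b) := by abel
      rw [h1, h2, inner_neg_right, norm_neg, inner_sub_left, real_inner_self_eq_norm_sq, hc]
      ring
    · rintro _ ⟨v, hv, rfl⟩
      exact mem_entSet_shift ε μ ν hKμ hKν hμK hνK a b hv
  rw [entOT_eq, entOT_eq, hset]
  have h := (OrderIso.addRight c).map_csInf' (entSet_nonempty ε μ ν) (entSet_bddBelow ε hε μ ν)
  simpa using h.symm


/-- **Decoupling of the mean in the Sinkhorn divergence with quadratic cost.**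
For compactly supported probability measures `μ₀, μ₁` on `ℝ^d` with means `m₀, m₁` and
centered versions `μ̄₀, μ̄₁`: `S_ε(μ₀,μ₁) = ‖m₁−m₀‖² + S_ε(μ̄₀,μ̄₁)`. -/
theorem stmt11 (d : ℕ) (ε : ℝ) (hε : 0 < ε)
    (μ₀ μ₁ : Measure (EuclideanSpace ℝ (Fin d)))
    [IsProbabilityMeasure μ₀] [IsProbabilityMeasure μ₁]
    (h₀ : ∃ K, IsCompact K ∧ μ₀ Kᶜ = 0) (h₁ : ∃ K, IsCompact K ∧ μ₁ Kᶜ = 0) :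
    sinkhorn ε cQuad μ₀ μ₁
      = ‖meanOf μ₁ - meanOf μ₀‖ ^ 2 + sinkhorn ε cQuad (centered μ₀) (centered μ₁) := by

  have e01 := entOT_shift ε hε μ₀ μ₁ h₀ h₁ (meanOf μ₀) (meanOf μ₁)
  have e00 := entOT_shift ε hε μ₀ μ₀ h₀ h₀ (meanOf μ₀) (meanOf μ₀)
  have e11 := entOT_shift ε hε μ₁ μ₁ h₁ h₁ (meanOf μ₁) (meanOf μ₁)
  have hcent₀ : centered μ₀ = μ₀.map (fun x => x - meanOf μ₀) := rfl
  have hcent₁ : centered μ₁ = μ₁.map (fun x => x - meanOf μ₁) := rfl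
  rw [sinkhorn, sinkhorn, hcent₀, hcent₁, e01, e00, e11]
  simp only [sub_self, inner_zero_right, norm_zero, real_inner_self_eq_norm_sq]
  rw [norm_sub_rev (meanOf μ₁) (meanOf μ₀)]
  ring
end
end

section
/- Let X be a compact metric space, ε > 0, and c : X × X → [0,∞) continuous, symmetric and nonnegative such that the kernel k_c(x,y) = exp(−c(x,y)/ε) is positive semidefinite, i.e. ∬ k_c(x,y) dσ(x) dσ(y) ≥ 0 for every finite signed Borel measure σ on X. If μ is a Borel probability measure on X and f : X → ℝ is a continuous function satisfying the symmetric Schrödinger fixed-point equation ∫_X exp((f(x)+f(y)−c(x,y))/ε) dμ(x) = 1 for every y ∈ X, then f(x) ≥ 0 for all x ∈ X. In other words, the entropic self-transport potential of any probability measure with respect to any nonnegative cost inducing a positive semidefinite kernel is nonnegative. -/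
open MeasureTheory Real
open scoped NNReal ENNReal

/-- **Nonnegativity of the entropic self-transport potential.** Let `X` be a compact
metric space, `ε > 0`, and `c` a continuous, symmetric, nonnegative cost whose kernel
`k_c(x,y) = exp(−c(x,y)/ε)` is positive semidefinite in the sense that
`∬ k_c dσ dσ ≥ 0` for every finite signed Borel measure `σ` (equivalently, for every
difference `σ = σ₁ − σ₂` of finite Borel measures). If `μ` is a Borel probability
measure and the continuous function `f` satisfies the symmetric Schrödinger fixed-point
equation `∫ exp((f(x)+f(y)−c(x,y))/ε) dμ(x) = 1` for all `y`, then `f ≥ 0`. -/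
theorem stmt15 {X : Type*} [MetricSpace X] [CompactSpace X]
    [MeasurableSpace X] [BorelSpace X]
    (ε : ℝ) (hε : 0 < ε) (c : X → X → ℝ)
    (hc_cont : Continuous fun p : X × X => c p.1 p.2)
    (hc_symm : ∀ x y, c x y = c y x) (hc_nonneg : ∀ x y, 0 ≤ c x y)
    (hpsd : ∀ σ₁ σ₂ : Measure X, IsFiniteMeasure σ₁ → IsFiniteMeasure σ₂ →
      0 ≤ (∫ x, ∫ y, Real.exp (-c x y / ε) ∂σ₁ ∂σ₁)
          - (∫ x, ∫ y, Real.exp (-c x y / ε) ∂σ₂ ∂σ₁)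
          - (∫ x, ∫ y, Real.exp (-c x y / ε) ∂σ₁ ∂σ₂)
          + ∫ x, ∫ y, Real.exp (-c x y / ε) ∂σ₂ ∂σ₂)
    (μ : Measure X) [IsProbabilityMeasure μ]
    (f : X → ℝ) (hf_cont : Continuous f)
    (hfp : ∀ y, ∫ x, Real.exp ((f x + f y - c x y) / ε) ∂μ = 1) :
    ∀ x, 0 ≤ f x := by
  intro x₀
  set g : X → ℝ := fun x => Real.exp (f x / ε) with hg
  have hg_cont : Continuous g := Real.continuous_exp.comp (hf_cont.div_const ε)
  have hg_pos : ∀ x, 0 < g x := fun x => Real.exp_pos _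
  -- fixed point in product form
  have hB : ∀ y, ∫ x, g x * Real.exp (-c x y / ε) ∂μ = Real.exp (-f y / ε) := by
    intro y
    have h1 := hfp y
    have h2 : ∀ x, Real.exp ((f x + f y - c x y) / ε)
        = (g x * Real.exp (-c x y / ε)) * g y := by
      intro x
      simp only [hg, ← Real.exp_add]
      ring_nf
    simp_rw [h2] at h1
    rw [integral_mul_const] at h1
    have hgy : g y ≠ 0 := (hg_pos y).ne'
    have h3 := eq_div_of_mul_eq hgy h1
    rw [h3, neg_div, Real.exp_neg, one_div]
  -- notation
  set B : ℝ := Real.exp (-f x₀ / ε) with hBdef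
  have hBpos : 0 < B := Real.exp_pos _
  set C : ℝ := Real.exp (-c x₀ x₀ / ε) with hCdef
  have hCpos : 0 < C := Real.exp_pos _
  have hCle : C ≤ 1 := by
    rw [hCdef, Real.exp_le_one_iff]
    exact div_nonpos_of_nonpos_of_nonneg (neg_nonpos.mpr (hc_nonneg x₀ x₀)) hε.le
  set t : ℝ := B / C with htdef
  have ht : 0 ≤ t := le_of_lt (div_pos hBpos hCpos)
  -- the two measures
  set d : X → ℝ≥0 := fun x => Real.toNNReal (g x) with hd
  have hd_meas : Measurable d := (continuous_real_toNNReal.comp hg_cont).measurable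
  set σ₁ : Measure X := μ.withDensity (fun x => (d x : ℝ≥0∞)) with hσ₁
  set σ₂ : Measure X := (ENNReal.ofReal t) • Measure.dirac x₀ with hσ₂
  have hg_int : Integrable g μ := hg_cont.integrable_of_hasCompactSupport
    ((isClosed_tsupport g).isCompact)
  have i1 : IsFiniteMeasure σ₁ := by
    have : (fun x => (d x : ℝ≥0∞)) = fun x => ENNReal.ofReal (g x) := by
      funext x; rw [ENNReal.ofReal]
    rw [hσ₁, this]
    exact isFiniteMeasure_withDensity_ofReal hg_int.hasFiniteIntegral
  have i2 : IsFiniteMeasure σ₂ := by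
    constructor
    rw [hσ₂]
    simp [ENNReal.ofReal_lt_top]
  -- integral identities
  have hint1 : ∀ h : X → ℝ, ∫ x, h x ∂σ₁ = ∫ x, g x * h x ∂μ := by
    intro h
    rw [hσ₁, integral_withDensity_eq_integral_smul hd_meas]
    congr 1
    funext x
    rw [NNReal.smul_def, smul_eq_mul, hd]
    simp [Real.coe_toNNReal _ (hg_pos x).le]
  have hint2 : ∀ h : X → ℝ, ∫ x, h x ∂σ₂ = t * h x₀ := by
    intro h
    rw [hσ₂, integral_smul_measure, integral_dirac, smul_eq_mul,
      ENNReal.toReal_ofReal ht]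
  have hinner : ∀ x, (∫ y, Real.exp (-c x y / ε) ∂σ₁) = Real.exp (-f x / ε) := by
    intro x
    rw [hint1]
    have : (fun y => g y * Real.exp (-c x y / ε))
        = fun y => g y * Real.exp (-c y x / ε) := by
      funext y; rw [hc_symm x y]
    rw [this]
    exact hB x
  -- the four double integrals
  have T11 : (∫ x, ∫ y, Real.exp (-c x y / ε) ∂σ₁ ∂σ₁) = 1 := by
    rw [hint1]
    simp_rw [hinner]
    have : ∀ x, g x * Real.exp (-f x / ε) = 1 := by
      intro x
      rw [hg]
      simp only
      rw [neg_div, ← Real.exp_add, add_neg_cancel, Real.exp_zero]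
    simp_rw [this]
    simp
  have T12 : (∫ x, ∫ y, Real.exp (-c x y / ε) ∂σ₂ ∂σ₁) = t * B := by
    rw [hint1]
    simp_rw [hint2]
    have hcomm : ∀ x : X, g x * (t * Real.exp (-c x x₀ / ε))
        = t * (g x * Real.exp (-c x x₀ / ε)) := fun x => by ring
    simp_rw [hcomm]
    rw [integral_const_mul, hB x₀]
  have T21 : (∫ x, ∫ y, Real.exp (-c x y / ε) ∂σ₁ ∂σ₂) = t * B := by
    rw [hint2, hinner x₀]
  have T22 : (∫ x, ∫ y, Real.exp (-c x y / ε) ∂σ₂ ∂σ₂) = t * (t * C) := by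
    rw [hint2]
    congr 1
    rw [hint2]
  have key := hpsd σ₁ σ₂ i1 i2
  rw [T11, T12, T21, T22] at key
  -- conclude
  have htC : t * (t * C) = B ^ 2 / C := by
    rw [htdef]; field_simp
  have htB : t * B = B ^ 2 / C := by
    rw [htdef]; field_simp
  rw [htB, htC] at key
  have hB2 : B ^ 2 ≤ C := by
    have h0 : 0 ≤ 1 - B ^ 2 / C := by linarith
    have := mul_le_mul_of_nonneg_right (by linarith : B ^ 2 / C ≤ 1) hCpos.le
    rwa [div_mul_cancel₀ _ hCpos.ne', one_mul] at this
  have hBle : B ≤ 1 := by nlinarith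
  rw [hBdef, Real.exp_le_one_iff] at hBle
  rw [neg_div, neg_nonpos] at hBle
  have := (div_nonneg_iff.mp hBle)
  rcases this with ⟨h, _⟩ | ⟨_, h⟩
  · exact h
  · linarith
end
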